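/- arXiv:0712.1918 — 4 statements merged into one kernel-verified Lean document; each statement's English description precedes it below -/
import Mathlib

section
/- Let p be a prime with p ≡ 1 (mod 4), let n ≥ 1 and A an integer. Define S₀(A; pⁿ) = #{(x,y) ∈ (ℤ/pⁿℤ)² : x² + y² ≡ A (mod pⁿ)}. If the p-adic valuation ν_p(A) ≥ n then S₀(A; pⁿ) = pⁿ + n·pⁿ(1 − 1/p), and if ν_p(A) < n then S₀(A; pⁿ) = (1 + ν_p(A))·pⁿ(1 − 1/p). -/
/-- Digit equivalence `ZMod N ≃ ZMod M × ZMod q` when `N = M * q`. -/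
def digitEquiv (N M q : ℕ) (h : N = M * q) [NeZero N] [NeZero M] [NeZero q] :
    ZMod N ≃ ZMod M × ZMod q where
  toFun v := ((v.val : ZMod M), ((v.val / M : ℕ) : ZMod q))
  invFun x := ((x.1.val + M * x.2.val : ℕ) : ZMod N)
  left_inv v := by
    have hM : 0 < M := Nat.pos_of_ne_zero (NeZero.ne M)
    have h1 : v.val < M * q := h ▸ ZMod.val_lt v
    have h2 : v.val / M < q := Nat.div_lt_of_lt_mul h1
    simp only [ZMod.val_natCast, Nat.mod_eq_of_lt h2]
    rw [Nat.mod_add_div]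
    exact ZMod.natCast_rightInverse v
  right_inv x := by
    have hM : 0 < M := Nat.pos_of_ne_zero (NeZero.ne M)
    have hq : 0 < q := Nat.pos_of_ne_zero (NeZero.ne q)
    have ha := ZMod.val_lt x.1
    have hb := ZMod.val_lt x.2
    have hlt : x.1.val + M * x.2.val < N := by rw [h]; nlinarith
    have hval : ((x.1.val + M * x.2.val : ℕ) : ZMod N).val = x.1.val + M * x.2.val := by
      rw [ZMod.val_natCast, Nat.mod_eq_of_lt hlt]
    refine Prod.ext ?_ ?_
    · show (((x.1.val + M * x.2.val : ℕ) : ZMod N).val : ZMod M) = x.1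
      rw [hval]
      push_cast
      rw [ZMod.natCast_self, zero_mul, add_zero]
      exact ZMod.natCast_rightInverse x.1
    · show ((((x.1.val + M * x.2.val : ℕ) : ZMod N).val / M : ℕ) : ZMod q) = x.2
      rw [hval, Nat.add_mul_div_left _ _ hM, Nat.div_eq_of_lt ha, zero_add]
      exact ZMod.natCast_rightInverse x.2

lemma digitEquiv_fst (N M q : ℕ) (h : N = M * q) [NeZero N] [NeZero M] [NeZero q] (v : ZMod N) :
    (digitEquiv N M q h v).1 = (v.val : ZMod M) := rfl

/-- Number of solutions of `u * v = A` in `ZMod (p^n)`. -/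
noncomputable def mulCount (p n : ℕ) (A : ℤ) : ℕ :=
  Nat.card {w : ZMod (p ^ n) × ZMod (p ^ n) // w.1 * w.2 = (A : ZMod (p ^ n))}

lemma mulCount_zero (p : ℕ) (A : ℤ) : mulCount p 0 A = 1 := by
  rw [mulCount]
  have : Subsingleton (ZMod (p ^ 0)) := by rw [pow_zero]; infer_instance
  rw [Nat.card_eq_one_iff_unique]
  exact ⟨⟨fun a b => Subtype.ext (Subsingleton.elim _ _)⟩,
    ⟨⟨(0, 0), Subsingleton.elim _ _⟩⟩⟩

/-- Solutions with `w.1` a unit are parametrized by the units. -/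
lemma card_unit_part {N : ℕ} [NeZero N] (a : ZMod N) :
    Nat.card {w : ZMod N × ZMod N // w.1 * w.2 = a ∧ IsUnit w.1}
      = Fintype.card (ZMod N)ˣ := by
  refine (Nat.card_eq_of_bijective
    (fun u : (ZMod N)ˣ => ⟨((u : ZMod N), (↑u⁻¹ * a)),
      by rw [← mul_assoc, Units.mul_inv, one_mul], u.isUnit⟩) ⟨?_, ?_⟩).symm.trans
    (Nat.card_eq_fintype_card)
  · intro u u' h
    exact Units.ext (congrArg (fun s => s.1.1) h)
  · rintro ⟨⟨u, v⟩, huv, hu⟩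
    refine ⟨hu.unit, Subtype.ext (Prod.ext ?_ ?_)⟩
    · exact hu.unit_spec
    · show (↑hu.unit⁻¹ * a : ZMod N) = v
      rw [← huv, ← mul_assoc, IsUnit.val_inv_mul, one_mul]

lemma card_units_pow {p n : ℕ} (hp : p.Prime) (hn : 1 ≤ n) [NeZero (p ^ n)] :
    Fintype.card (ZMod (p ^ n))ˣ = p ^ n - p ^ (n - 1) := by
  rw [ZMod.card_units_eq_totient, Nat.totient_prime_pow hp hn]
  have h1 : p ^ (n - 1) * p = p ^ n := by
    rw [← pow_succ]; congr 1; omega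
  rw [Nat.mul_sub, mul_one, h1]

lemma isUnit_iff_not_dvd {p n : ℕ} (hp : p.Prime) (hn : 1 ≤ n) (u : ZMod (p ^ n)) :
    IsUnit u ↔ ¬ p ∣ u.val := by
  haveI : NeZero (p ^ n) := ⟨pow_ne_zero n hp.ne_zero⟩
  rw [← ZMod.natCast_rightInverse u, ZMod.isUnit_iff_coprime,
    Nat.coprime_pow_right_iff hn, Nat.coprime_comm, hp.coprime_iff_not_dvd,
    ZMod.natCast_rightInverse u]

lemma zmod_int_eq_iff (m : ℕ) (x y : ℤ) : ((x : ZMod m) = (y : ZMod m)) ↔ (m : ℤ) ∣ x - y := by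
  rw [ZMod.intCast_eq_intCast_iff]
  exact ⟨fun h => h.symm.dvd, fun h => (Int.modEq_iff_dvd.mpr h).symm⟩

lemma dvd_val_iff {p n : ℕ} (hp : p.Prime) (hn : 1 ≤ n) (A : ℤ) :
    p ∣ ((A : ZMod (p ^ n)).val) ↔ (p : ℤ) ∣ A := by
  haveI : NeZero (p ^ n) := ⟨pow_ne_zero n hp.ne_zero⟩
  have h0 : ((((A : ZMod (p ^ n)).val : ℤ) : ZMod (p ^ n)) = (A : ZMod (p ^ n))) := by
    push_cast
    rw [ZMod.natCast_rightInverse]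
  have h1 : ((p : ℤ)) ∣ ((A : ZMod (p ^ n)).val : ℤ) - A := by
    refine dvd_trans ?_ ((zmod_int_eq_iff _ _ _).mp h0)
    push_cast
    exact dvd_pow_self _ (by omega)
  rw [← Int.natCast_dvd_natCast (n := (A : ZMod (p^n)).val) (m := p)]
  constructor
  · intro h
    have := dvd_sub h h1
    simpa using this
  · intro h
    have := dvd_add h h1
    simpa using this

lemma mulCount_not_dvd {p n : ℕ} (hp : p.Prime) (hn : 1 ≤ n) {A : ℤ} (hA : ¬ (p : ℤ) ∣ A) :
    mulCount p n A = p ^ n - p ^ (n - 1) := by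
  haveI : NeZero (p ^ n) := ⟨pow_ne_zero n hp.ne_zero⟩
  have hu : IsUnit ((A : ℤ) : ZMod (p ^ n)) := by
    rw [isUnit_iff_not_dvd hp hn, dvd_val_iff hp hn]; exact hA
  rw [mulCount, Nat.card_congr (Equiv.subtypeEquivRight (q := fun w : ZMod (p^n) × ZMod (p^n) =>
      w.1 * w.2 = (A : ZMod (p^n)) ∧ IsUnit w.1) ?_), card_unit_part, card_units_pow hp hn]
  intro w
  exact ⟨fun h => ⟨h, isUnit_of_mul_isUnit_left (h ▸ hu)⟩, fun h => h.1⟩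

open Classical in
lemma mulCount_rec {p n : ℕ} (hp : p.Prime) (hn : 1 ≤ n) (B : ℤ) :
    mulCount p n (p * B) = (p ^ n - p ^ (n - 1)) + p * mulCount p (n - 1) B := by
  haveI : NeZero (p ^ n) := ⟨pow_ne_zero n hp.ne_zero⟩
  haveI : NeZero (p ^ (n - 1)) := ⟨pow_ne_zero _ hp.ne_zero⟩
  haveI : NeZero p := ⟨hp.ne_zero⟩
  have hNM : p ^ n = p ^ (n - 1) * p := by rw [← pow_succ]; congr 1; omega
  set a : ZMod (p ^ n) := ((p * B : ℤ) : ZMod (p ^ n)) with ha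
  have e1 : {w : ZMod (p^n) × ZMod (p^n) // w.1 * w.2 = a} ≃
      {w : ZMod (p^n) × ZMod (p^n) // w.1 * w.2 = a ∧ IsUnit w.1} ⊕
      {w : ZMod (p^n) × ZMod (p^n) // w.1 * w.2 = a ∧ ¬ IsUnit w.1} := by
    refine (Equiv.sumCompl (fun s : {w : ZMod (p^n) × ZMod (p^n) // w.1 * w.2 = a} =>
      IsUnit s.1.1)).symm.trans (Equiv.sumCongr ?_ ?_)
    · exact Equiv.subtypeSubtypeEquivSubtypeInter
        (fun w : ZMod (p^n) × ZMod (p^n) => w.1 * w.2 = a) (fun w => IsUnit w.1)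
    · exact Equiv.subtypeSubtypeEquivSubtypeInter
        (fun w : ZMod (p^n) × ZMod (p^n) => w.1 * w.2 = a) (fun w => ¬ IsUnit w.1)
  rw [mulCount, Nat.card_congr e1, Nat.card_sum, card_unit_part, card_units_pow hp hn]
  congr 1
  -- the non-unit part
  have hNM' : p ^ n = p * p ^ (n - 1) := by rw [hNM]; ring
  have hpow : ((p ^ n : ℕ) : ℤ) = (p : ℤ) * ((p ^ (n - 1) : ℕ) : ℤ) := by
    push_cast; rw [← pow_succ']; congr 1; omega
  have ha' : (p : ZMod (p ^ n)) * ((B : ℤ) : ZMod (p ^ n)) = a := by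
    rw [ha]; push_cast; ring
  have not_unit : ∀ u₀ : ZMod (p ^ (n - 1)), ¬ IsUnit ((p * u₀.val : ℕ) : ZMod (p ^ n)) := by
    intro u₀ hu
    rw [isUnit_iff_not_dvd hp hn] at hu
    exact hu (by
      rw [ZMod.val_natCast]
      exact (Nat.dvd_mod_iff (dvd_pow_self p (by omega))).mpr (dvd_mul_right p _))
  have cond_fwd : ∀ (u₀ : ZMod (p ^ (n - 1))) (v : ZMod (p ^ n)),
      u₀ * ((v.val : ℕ) : ZMod (p ^ (n - 1))) = (B : ZMod (p ^ (n - 1))) →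
      ((p * u₀.val : ℕ) : ZMod (p ^ n)) * v = a := by
    intro u₀ v h
    have hdvd : ((p ^ (n - 1) : ℕ) : ℤ) ∣ ((u₀.val : ℤ) * (v.val : ℤ) - B) := by
      rw [← zmod_int_eq_iff]
      push_cast
      rw [ZMod.natCast_rightInverse u₀]
      exact h
    have h2 : ((((p : ℤ) * (u₀.val : ℤ) * (v.val : ℤ) : ℤ)) : ZMod (p ^ n))
        = ((p * B : ℤ) : ZMod (p ^ n)) := by
      rw [zmod_int_eq_iff, hpow]
      have h3 := mul_dvd_mul_left (p : ℤ) hdvd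
      convert h3 using 1; exacts [rfl, by ring]
    have h4 : (p : ZMod (p ^ n)) * ((u₀.val : ℕ) : ZMod (p ^ n))
        * ((v.val : ℕ) : ZMod (p ^ n)) = a := by
      rw [ha]; exact_mod_cast h2
    rw [ZMod.natCast_rightInverse v] at h4
    push_cast
    exact h4
  -- the bijection
  have hbij : Nat.card {x : ZMod (p ^ (n - 1)) × ZMod (p ^ n) //
        x.1 * ((x.2.val : ℕ) : ZMod (p ^ (n - 1))) = (B : ZMod (p ^ (n - 1)))}
      = Nat.card {w : ZMod (p ^ n) × ZMod (p ^ n) // w.1 * w.2 = a ∧ ¬ IsUnit w.1} := by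
    refine Nat.card_eq_of_bijective (fun x =>
      ⟨(((p * x.1.1.val : ℕ) : ZMod (p ^ n)), x.1.2),
        cond_fwd x.1.1 x.1.2 x.2, not_unit x.1.1⟩) ⟨?_, ?_⟩
    · rintro ⟨⟨u₀, v⟩, hx⟩ ⟨⟨u₀', v'⟩, hy⟩ hxy
      have hv : v = v' := congrArg (fun s => s.1.2) hxy
      have hu : ((p * u₀.val : ℕ) : ZMod (p ^ n)) = ((p * u₀'.val : ℕ) : ZMod (p ^ n)) :=
        congrArg (fun s => s.1.1) hxy
      rw [ZMod.natCast_eq_natCast_iff, hNM'] at hu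
      have := (Nat.ModEq.mul_left_cancel' hp.ne_zero hu).eq_of_lt_of_lt
        (ZMod.val_lt u₀) (ZMod.val_lt u₀')
      exact Subtype.ext (Prod.ext (ZMod.val_injective _ this) hv)
    · rintro ⟨⟨u, v⟩, huv, hu⟩
      have hpu : p ∣ u.val := by
        rw [isUnit_iff_not_dvd hp hn, not_not] at hu
        exact hu
      obtain ⟨t, ht⟩ := hpu
      have htM : t < p ^ (n - 1) := by
        have h5 : u.val < p * p ^ (n - 1) := hNM' ▸ ZMod.val_lt u
        rw [ht] at h5
        exact lt_of_mul_lt_mul_left h5 (Nat.zero_le p)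
      have hdvd2 : ((p ^ n : ℕ) : ℤ) ∣ ((u.val : ℤ) * (v.val : ℤ) - p * B) := by
        rw [← zmod_int_eq_iff]
        push_cast
        rw [ZMod.natCast_rightInverse u, ZMod.natCast_rightInverse v]
        rw [huv, ha]; push_cast; ring
      have hdvd3 : ((p ^ (n - 1) : ℕ) : ℤ) ∣ ((t : ℤ) * (v.val : ℤ) - B) := by
        have h6 : ((u.val : ℤ) * (v.val : ℤ) - p * B)
            = (p : ℤ) * ((t : ℤ) * (v.val : ℤ) - B) := by
          rw [show ((u.val : ℤ)) = (p : ℤ) * t by exact_mod_cast congrArg (Nat.cast : ℕ → ℤ) ht]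
          ring
        rw [h6, hpow] at hdvd2
        exact (mul_dvd_mul_iff_left (by exact_mod_cast hp.ne_zero : (p : ℤ) ≠ 0)).mp hdvd2
      have hcond : ((t : ℕ) : ZMod (p ^ (n - 1))) * ((v.val : ℕ) : ZMod (p ^ (n - 1)))
          = (B : ZMod (p ^ (n - 1))) := by
        have h7 := (zmod_int_eq_iff (p ^ (n - 1)) ((t : ℤ) * (v.val : ℤ)) B).mpr hdvd3
        exact_mod_cast h7
      refine ⟨⟨(((t : ℕ) : ZMod (p ^ (n - 1))), v), hcond⟩, Subtype.ext (Prod.ext ?_ rfl)⟩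
      show ((p * ((t : ℕ) : ZMod (p ^ (n - 1))).val : ℕ) : ZMod (p ^ n)) = u
      rw [ZMod.val_natCast]
      have h8 : ((p * (t % p ^ (n - 1)) : ℕ) : ZMod (p ^ n)) = ((p * t : ℕ) : ZMod (p ^ n)) := by
        rw [ZMod.natCast_eq_natCast_iff, hNM']
        exact (Nat.mod_modEq t (p ^ (n - 1))).mul_left' p
      rw [h8, ← ht, ZMod.natCast_rightInverse u]
  rw [← hbij]
  -- now count the domain via the digit equivalence
  have e2 : {x : ZMod (p ^ (n - 1)) × ZMod (p ^ n) //
        x.1 * ((x.2.val : ℕ) : ZMod (p ^ (n - 1))) = (B : ZMod (p ^ (n - 1)))} ≃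
      {z : ZMod (p ^ (n - 1)) × ZMod (p ^ (n - 1)) // z.1 * z.2 = (B : ZMod (p ^ (n - 1)))}
        × ZMod p := by
    have estep : {x : ZMod (p ^ (n - 1)) × ZMod (p ^ n) //
          x.1 * ((x.2.val : ℕ) : ZMod (p ^ (n - 1))) = (B : ZMod (p ^ (n - 1)))} ≃
        {y : ZMod (p ^ (n - 1)) × (ZMod (p ^ (n - 1)) × ZMod p) //
          y.1 * y.2.1 = (B : ZMod (p ^ (n - 1)))} :=
      Equiv.subtypeEquiv
        ((Equiv.refl (ZMod (p ^ (n - 1)))).prodCongr (digitEquiv (p ^ n) (p ^ (n - 1)) p hNM))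
        (fun x => Iff.rfl)
    refine estep.trans ?_
    exact {
      toFun := fun y => (⟨(y.1.1, y.1.2.1), y.2⟩, y.1.2.2)
      invFun := fun z => ⟨(z.1.1.1, (z.1.1.2, z.2)), z.1.2⟩
      left_inv := fun y => rfl
      right_inv := fun z => rfl }
  rw [Nat.card_congr e2, Nat.card_prod, Nat.card_zmod, mulCount]
  ring

lemma mulCount_formula {p : ℕ} (hp : p.Prime) : ∀ n, 1 ≤ n → ∀ A : ℤ,
    mulCount p n A = if (p : ℤ) ^ n ∣ A then p ^ n + n * (p ^ n - p ^ (n - 1))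
      else (1 + padicValInt p A) * (p ^ n - p ^ (n - 1)) := by
  haveI : Fact p.Prime := ⟨hp⟩
  have hp2 := hp.two_le
  refine Nat.le_induction ?_ ?_
  · intro A
    by_cases hA : (p : ℤ) ∣ A
    · obtain ⟨B, rfl⟩ := hA
      rw [mulCount_rec hp le_rfl, if_pos (by rw [pow_one]; exact dvd_mul_right _ _)]
      simp only [pow_one, pow_zero, Nat.sub_self, mulCount_zero]
      omega
    · rw [mulCount_not_dvd hp le_rfl hA, if_neg (by rwa [pow_one]),
        padicValInt.eq_zero_of_not_dvd hA]
      simp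
  · intro n hn IH A
    have key : p * (p ^ n - p ^ (n - 1)) = p ^ (n + 1) - p ^ n := by
      rw [Nat.mul_sub]
      congr 1
      · rw [← pow_succ']
      · rw [← pow_succ']; congr 1; omega
    by_cases hA : (p : ℤ) ∣ A
    · obtain ⟨B, rfl⟩ := hA
      rw [mulCount_rec hp (by omega), Nat.add_sub_cancel, IH B]
      have hps : ((p : ℤ)) ^ (n + 1) = (p : ℤ) * (p : ℤ) ^ n := by rw [pow_succ']
      by_cases h1 : (p : ℤ) ^ n ∣ B
      · rw [if_pos h1, if_pos (by rw [hps]; exact mul_dvd_mul_left _ h1)]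
        rw [mul_add, ← pow_succ', mul_left_comm p n, key]
        ring
      · have hB0 : B ≠ 0 := fun h => h1 (h ▸ dvd_zero _)
        rw [if_neg h1, if_neg (by
          rw [hps]
          intro h
          exact h1 ((mul_dvd_mul_iff_left
            (by exact_mod_cast hp.ne_zero : (p : ℤ) ≠ 0)).mp h))]
        rw [show (p : ℤ) * B = B * p by ring,
          padicValInt_mul_eq_succ B hB0, mul_left_comm p (1 + padicValInt p B), key]
        ring
    · rw [mulCount_not_dvd hp (by omega) hA, if_neg (fun h => hA
        ((dvd_pow_self (p : ℤ) (Nat.succ_ne_zero n)).trans h)),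
        padicValInt.eq_zero_of_not_dvd hA, Nat.add_sub_cancel]
      simp

lemma exists_sqrt_neg_one {p : ℕ} (hp : p.Prime) (hp1 : p % 4 = 1) :
    ∀ n, 1 ≤ n → ∃ x : ℤ, (p : ℤ) ^ n ∣ x ^ 2 + 1 := by
  haveI : Fact p.Prime := ⟨hp⟩
  have hp2 := hp.two_le
  have hpint : Prime (p : ℤ) := Nat.prime_iff_prime_int.mp hp
  refine Nat.le_induction ?_ ?_
  · obtain ⟨y, hy⟩ := (ZMod.exists_sq_eq_neg_one_iff (p := p)).mpr (by omega)
    refine ⟨(y.val : ℤ), ?_⟩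
    rw [pow_one, ← ZMod.intCast_zmod_eq_zero_iff_dvd]
    push_cast
    rw [ZMod.natCast_rightInverse y, sq, ← hy]
    ring
  · rintro n hn ⟨x, hx⟩
    obtain ⟨c, hc⟩ := hx
    have hpx : ¬ (p : ℤ) ∣ x := by
      intro h
      have h1 : (p : ℤ) ∣ x ^ 2 + 1 := (dvd_pow_self (p : ℤ) (by omega)).trans ⟨c, hc⟩
      have h2 : (p : ℤ) ∣ x ^ 2 := (dvd_pow h (by omega))
      have := (Int.dvd_add_right h2).mp h1
      have := Int.le_of_dvd one_pos this
      omega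
    have h2x : ((2 * x : ℤ) : ZMod p) ≠ 0 := by
      rw [Ne, ZMod.intCast_zmod_eq_zero_iff_dvd]
      intro h
      rcases hpint.dvd_mul.mp h with h | h
      · have : (p : ℤ) ≤ 2 := Int.le_of_dvd (by norm_num) h
        omega
      · exact hpx h
    set w : ZMod p := - (c : ZMod p) * ((2 * x : ℤ) : ZMod p)⁻¹ with hw
    set t : ℤ := (w.val : ℤ) with ht
    have hkey : (p : ℤ) ∣ c + 2 * x * t := by
      rw [← ZMod.intCast_zmod_eq_zero_iff_dvd]
      have hwc : ((t : ℤ) : ZMod p) = w := by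
        rw [ht]; push_cast; exact ZMod.natCast_rightInverse w
      have hmul : ((2 * x : ℤ) : ZMod p) * w = -(c : ZMod p) := by
        rw [hw, mul_comm, mul_assoc, inv_mul_cancel₀ h2x, mul_one]
      push_cast
      rw [show ((2 : ZMod p) * (x : ZMod p) * (t : ZMod p) = ((2 * x : ℤ) : ZMod p) * w) by
        rw [← hwc]; push_cast; ring]
      rw [hmul]
      ring
    refine ⟨x + t * (p : ℤ) ^ n, ?_⟩
    have hid : (x + t * (p : ℤ) ^ n) ^ 2 + 1
        = (p : ℤ) ^ n * (c + 2 * x * t) + t ^ 2 * ((p : ℤ) ^ n) ^ 2 := by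
      linear_combination hc
    rw [hid, pow_succ]
    refine dvd_add (mul_dvd_mul_left _ hkey) ?_
    refine Dvd.dvd.mul_left ?_ _
    rw [← pow_succ, ← pow_mul]
    exact pow_dvd_pow _ (by omega)

/-- The count `S₀(A; pⁿ)` of solutions of `x² + y² ≡ A (mod pⁿ)` for a prime `p ≡ 1 (mod 4)`. -/
theorem count_sum_two_squares_mod_p_one_mod_four (p n : ℕ) (hp : p.Prime)
    (hp1 : p % 4 = 1) (hn : 1 ≤ n) (A : ℤ) :
    (((p : ℤ) ^ n ∣ A →
      Nat.card {xy : ZMod (p ^ n) × ZMod (p ^ n) // xy.1 ^ 2 + xy.2 ^ 2 = (A : ZMod (p ^ n))}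
        = p ^ n + n * (p ^ n - p ^ (n - 1)))
    ∧ (¬ (p : ℤ) ^ n ∣ A →
      Nat.card {xy : ZMod (p ^ n) × ZMod (p ^ n) // xy.1 ^ 2 + xy.2 ^ 2 = (A : ZMod (p ^ n))}
        = (1 + padicValInt p A) * (p ^ n - p ^ (n - 1)))) := by
  haveI : NeZero (p ^ n) := ⟨pow_ne_zero n hp.ne_zero⟩
  -- a square root of -1
  obtain ⟨x, hx⟩ := exists_sqrt_neg_one hp hp1 n hn
  set i : ZMod (p ^ n) := ((x : ℤ) : ZMod (p ^ n)) with hidef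
  have hi : i ^ 2 = -1 := by
    have h0 : ((x ^ 2 + 1 : ℤ) : ZMod (p ^ n)) = 0 := by
      rw [ZMod.intCast_zmod_eq_zero_iff_dvd]
      exact_mod_cast hx
    push_cast at h0
    linear_combination h0
  -- 2 is invertible
  have h2u : IsUnit (2 : ZMod (p ^ n)) := by
    have : ((2 : ℕ) : ZMod (p ^ n)) = (2 : ZMod (p ^ n)) := by norm_cast
    rw [← this, ZMod.isUnit_iff_coprime]
    exact Nat.Coprime.pow_right n
      ((Nat.coprime_primes Nat.prime_two hp).mpr (by omega))
  set c : ZMod (p ^ n) := ↑h2u.unit⁻¹ with hcdef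
  have hc : (2 : ZMod (p ^ n)) * c = 1 := by
    rw [hcdef]
    exact h2u.mul_val_inv
  -- the bijection between sums of two squares and products
  have E : {xy : ZMod (p ^ n) × ZMod (p ^ n) // xy.1 ^ 2 + xy.2 ^ 2 = (A : ZMod (p ^ n))} ≃
      {w : ZMod (p ^ n) × ZMod (p ^ n) // w.1 * w.2 = (A : ZMod (p ^ n))} :=
    { toFun := fun s => ⟨(s.1.1 + i * s.1.2, s.1.1 - i * s.1.2), by
        have hs := s.2
        linear_combination hs - s.1.2 ^ 2 * hi⟩
      invFun := fun w => ⟨((w.1.1 + w.1.2) * c, (w.1.2 - w.1.1) * c * i), by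
        have hw := w.2
        linear_combination (c ^ 2 * (w.1.2 - w.1.1) ^ 2) * hi
          + (w.1.1 * w.1.2 * (2 * c + 1)) * hc + hw⟩
      left_inv := fun s => Subtype.ext (Prod.ext
        (by linear_combination s.1.1 * hc)
        (by linear_combination (-2 * s.1.2 * c) * hi + s.1.2 * hc))
      right_inv := fun w => Subtype.ext (Prod.ext
        (by linear_combination ((w.1.2 - w.1.1) * c) * hi + w.1.1 * hc)
        (by linear_combination (-(w.1.2 - w.1.1) * c) * hi + w.1.2 * hc)) }
  have hcount : Nat.card {xy : ZMod (p ^ n) × ZMod (p ^ n) //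
      xy.1 ^ 2 + xy.2 ^ 2 = (A : ZMod (p ^ n))} = mulCount p n A := Nat.card_congr E
  constructor
  · intro hd
    rw [hcount, mulCount_formula hp n hn A, if_pos hd]
  · intro hd
    rw [hcount, mulCount_formula hp n hn A, if_neg hd]
end

section
/- Let p be a prime with p ≡ 3 (mod 4), let n ≥ 1 and A an integer. Define S₀(A; pⁿ) = #{(x,y) ∈ (ℤ/pⁿℤ)² : x² + y² ≡ A (mod pⁿ)}. Then S₀(A; pⁿ) = p^{2⌊n/2⌋} if ν_p(A) ≥ n; S₀(A; pⁿ) = pⁿ(1 + 1/p) if ν_p(A) < n and ν_p(A) is even; and S₀(A; pⁿ) = 0 if ν_p(A) < n and ν_p(A) is odd. -/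
lemma zmodp_sq_add_sq_eq_zero {p : ℕ} (hp : p.Prime) (hp3 : p % 4 = 3) {x y : ZMod p}
    (h : x ^ 2 + y ^ 2 = 0) : x = 0 ∧ y = 0 := by
  haveI : Fact p.Prime := ⟨hp⟩
  have key : ∀ u v : ZMod p, u ^ 2 + v ^ 2 = 0 → v = 0 := by
    intro u v huv
    by_contra hv
    have : (u * v⁻¹) ^ 2 = -1 := by
      field_simp
      linear_combination huv
    have : IsSquare (-1 : ZMod p) := ⟨u * v⁻¹, by rw [← this]; ring⟩
    rw [ZMod.exists_sq_eq_neg_one_iff] at this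
    exact this hp3
  have hy := key x y h
  have hx := key y x (by linear_combination h)
  exact ⟨hx, hy⟩

lemma int_dvd_of_dvd_sq_add_sq {p : ℕ} (hp : p.Prime) (hp3 : p % 4 = 3) {x y : ℤ}
    (h : (p : ℤ) ∣ x ^ 2 + y ^ 2) : (p : ℤ) ∣ x ∧ (p : ℤ) ∣ y := by
  have h0 : ((x : ZMod p)) ^ 2 + ((y : ZMod p)) ^ 2 = 0 := by
    have := (ZMod.intCast_zmod_eq_zero_iff_dvd (x ^ 2 + y ^ 2) p).2 h
    push_cast at this
    exact this
  obtain ⟨hx, hy⟩ := zmodp_sq_add_sq_eq_zero hp hp3 h0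
  exact ⟨(ZMod.intCast_zmod_eq_zero_iff_dvd x p).1 hx,
    (ZMod.intCast_zmod_eq_zero_iff_dvd y p).1 hy⟩

/-- integer-pair count of solutions of `x²+y² ≡ A mod p^n`. -/
def scount (p n : ℕ) (A : ℤ) : ℕ :=
  (((Finset.range (p ^ n)) ×ˢ (Finset.range (p ^ n))).filter
    (fun z => (p : ℤ) ^ n ∣ (z.1 : ℤ) ^ 2 + (z.2 : ℤ) ^ 2 - A)).card

lemma card_eq_scount (p n : ℕ) (hp : p.Prime) (A : ℤ) :
    Nat.card {xy : ZMod (p ^ n) × ZMod (p ^ n) // xy.1 ^ 2 + xy.2 ^ 2 = (A : ZMod (p ^ n))}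
      = scount p n A := by
  haveI : Fact p.Prime := ⟨hp⟩
  haveI : NeZero (p ^ n) := ⟨pow_ne_zero n hp.ne_zero⟩
  rw [Nat.card_eq_fintype_card, Fintype.card_subtype, scount]
  apply Finset.card_bij (fun xy _ => (xy.1.val, xy.2.val))
  · intro a ha
    simp only [Finset.mem_filter, Finset.mem_univ, true_and] at ha
    simp only [Finset.mem_filter, Finset.mem_product, Finset.mem_range]
    refine ⟨⟨ZMod.val_lt _, ZMod.val_lt _⟩, ?_⟩
    rw [← Nat.cast_pow, ← ZMod.intCast_zmod_eq_zero_iff_dvd]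
    push_cast
    rw [ZMod.natCast_val, ZMod.natCast_val, ZMod.cast_id, ZMod.cast_id, ha]
    ring
  · intro a ha b hb hab
    have h1 : a.1.val = b.1.val := congrArg Prod.fst hab
    have h2 : a.2.val = b.2.val := congrArg Prod.snd hab
    exact Prod.ext (ZMod.val_injective _ h1) (ZMod.val_injective _ h2)
  · intro b hb
    simp only [Finset.mem_filter, Finset.mem_product, Finset.mem_range] at hb
    refine ⟨((b.1 : ZMod (p ^ n)), (b.2 : ZMod (p ^ n))), ?_, ?_⟩
    · simp only [Finset.mem_filter, Finset.mem_univ, true_and]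
      have := (ZMod.intCast_zmod_eq_zero_iff_dvd ((b.1 : ℤ) ^ 2 + (b.2 : ℤ) ^ 2 - A) (p ^ n)).2
        (by push_cast; exact_mod_cast hb.2)
      push_cast at this
      linear_combination this
    · simp [ZMod.val_cast_of_lt hb.1.1, ZMod.val_cast_of_lt hb.1.2]


-- assume previous lemmas available; test standalone pieces
lemma sphere_card_mul {p : ℕ} [Fact p.Prime] {a : ZMod p} (ha : a ≠ 0)
    {u v : ZMod p} (huv : u ^ 2 + v ^ 2 = a) (c : ZMod p) :
    (Finset.univ.filter (fun xy : ZMod p × ZMod p => xy.1 ^ 2 + xy.2 ^ 2 = c)).card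
      = (Finset.univ.filter (fun xy : ZMod p × ZMod p => xy.1 ^ 2 + xy.2 ^ 2 = a * c)).card := by
  apply Finset.card_bij' (fun xy _ => (u * xy.1 - v * xy.2, u * xy.2 + v * xy.1))
    (fun xy _ => ((u * xy.1 + v * xy.2) / a, (u * xy.2 - v * xy.1) / a))
  · intro w hw
    simp only [Finset.mem_filter, Finset.mem_univ, true_and] at hw ⊢
    linear_combination (w.1 ^ 2 + w.2 ^ 2) * huv + a * hw
  · intro w hw
    simp only [Finset.mem_filter, Finset.mem_univ, true_and] at hw ⊢
    field_simp
    linear_combination (w.1 ^ 2 + w.2 ^ 2) * huv + a * hw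
  · intro w hw
    refine Prod.ext ?_ ?_
    · show (u * (u * w.1 - v * w.2) + v * (u * w.2 + v * w.1)) / a = w.1
      rw [div_eq_iff ha]; linear_combination w.1 * huv
    · show (u * (u * w.2 + v * w.1) - v * (u * w.1 - v * w.2)) / a = w.2
      rw [div_eq_iff ha]; linear_combination w.2 * huv
  · intro w hw
    refine Prod.ext ?_ ?_
    · show u * ((u * w.1 + v * w.2) / a) - v * ((u * w.2 - v * w.1) / a) = w.1
      field_simp
      linear_combination w.1 * huv
    · show u * ((u * w.2 - v * w.1) / a) + v * ((u * w.1 + v * w.2) / a) = w.2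
      field_simp
      linear_combination w.2 * huv

lemma zmodp_sq_add_sq_eq_zero' {p : ℕ} [Fact p.Prime] (hp3 : p % 4 = 3) {x y : ZMod p}
    (h : x ^ 2 + y ^ 2 = 0) : x = 0 ∧ y = 0 := by
  have key : ∀ u v : ZMod p, u ^ 2 + v ^ 2 = 0 → v = 0 := by
    intro u v huv
    by_contra hv
    have h1 : (u * v⁻¹) ^ 2 = -1 := by
      field_simp
      linear_combination huv
    have h2 : IsSquare (-1 : ZMod p) := ⟨u * v⁻¹, by rw [← h1]; ring⟩
    rw [ZMod.exists_sq_eq_neg_one_iff] at h2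
    exact h2 hp3
  exact ⟨key y x (by linear_combination h), key x y h⟩

lemma sphere_card_zero {p : ℕ} [Fact p.Prime] (hp3 : p % 4 = 3) :
    (Finset.univ.filter (fun xy : ZMod p × ZMod p => xy.1 ^ 2 + xy.2 ^ 2 = 0)).card = 1 := by
  rw [Finset.card_eq_one]
  refine ⟨(0, 0), ?_⟩
  ext w
  simp only [Finset.mem_filter, Finset.mem_univ, true_and, Finset.mem_singleton]
  constructor
  · intro h
    obtain ⟨h1, h2⟩ := zmodp_sq_add_sq_eq_zero' hp3 h
    exact Prod.ext h1 h2
  · rintro rfl; simp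

lemma sphere_card_unit {p : ℕ} [Fact p.Prime] (hp3 : p % 4 = 3) {a : ZMod p} (ha : a ≠ 0) :
    (Finset.univ.filter (fun xy : ZMod p × ZMod p => xy.1 ^ 2 + xy.2 ^ 2 = a)).card = p + 1 := by
  have hp := (Fact.out : p.Prime)
  -- all unit spheres have the same cardinality, namely that of the unit sphere at 1
  have hsame : ∀ b : ZMod p, b ≠ 0 →
      (Finset.univ.filter (fun xy : ZMod p × ZMod p => xy.1 ^ 2 + xy.2 ^ 2 = b)).card
        = (Finset.univ.filter (fun xy : ZMod p × ZMod p => xy.1 ^ 2 + xy.2 ^ 2 = (1 : ZMod p))).card := by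
    intro b hb
    obtain ⟨u, v, huv⟩ := ZMod.sq_add_sq p b
    have := sphere_card_mul (a := b) hb huv (1 : ZMod p)
    rw [mul_one] at this
    exact this.symm
  -- partition the plane by the value of x²+y²
  have hpart : ∑ b : ZMod p,
      (Finset.univ.filter (fun xy : ZMod p × ZMod p => xy.1 ^ 2 + xy.2 ^ 2 = b)).card
        = p ^ 2 := by
    rw [← Finset.card_eq_sum_card_fiberwise (f := fun xy : ZMod p × ZMod p => xy.1 ^ 2 + xy.2 ^ 2)
      (fun x _ => Finset.mem_univ _)]
    simp [ZMod.card, sq]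
  rw [Fintype.sum_eq_add_sum_compl 0] at hpart
  rw [sphere_card_zero hp3] at hpart
  have hconst : ∑ b ∈ ({0}ᶜ : Finset (ZMod p)),
      (Finset.univ.filter (fun xy : ZMod p × ZMod p => xy.1 ^ 2 + xy.2 ^ 2 = b)).card
        = (p - 1) * (Finset.univ.filter (fun xy : ZMod p × ZMod p => xy.1 ^ 2 + xy.2 ^ 2 = (1 : ZMod p))).card := by
    rw [Finset.sum_congr rfl (fun b hb => hsame b (by simpa using hb)), Finset.sum_const,
      smul_eq_mul]
    congr 1
    rw [Finset.card_compl, Finset.card_singleton, ZMod.card]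
  rw [hconst] at hpart
  have h1 : (Finset.univ.filter (fun xy : ZMod p × ZMod p => xy.1 ^ 2 + xy.2 ^ 2 = (1 : ZMod p))).card = p + 1 := by
    have hp2 : 2 ≤ p := hp.two_le
    set X := (Finset.univ.filter (fun xy : ZMod p × ZMod p => xy.1 ^ 2 + xy.2 ^ 2 = (1 : ZMod p))).card with hX
    zify [show 1 ≤ p from hp.one_le] at hpart
    have hmul : ((p : ℤ) - 1) * X = ((p : ℤ) - 1) * (p + 1) := by ring_nf; ring_nf at hpart; linarith
    have hne : ((p : ℤ) - 1) ≠ 0 := by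
      have : (2 : ℤ) ≤ (p : ℤ) := by exact_mod_cast hp2
      linarith
    have := mul_left_cancel₀ hne hmul
    exact_mod_cast this
  rw [hsame a ha, h1]


lemma scount_one {p : ℕ} (hp : p.Prime) (hp3 : p % 4 = 3) (A : ℤ) :
    scount p 1 A = if (p : ℤ) ∣ A then 1 else p + 1 := by
  haveI : Fact p.Prime := ⟨hp⟩
  have h := card_eq_scount p 1 hp A
  rw [pow_one] at h
  rw [Nat.card_eq_fintype_card, Fintype.card_subtype] at h
  rw [← h]
  by_cases hd : (p : ℤ) ∣ A
  · have hA0 : (A : ZMod p) = 0 := (ZMod.intCast_zmod_eq_zero_iff_dvd A p).2 hd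
    rw [if_pos hd, hA0]
    exact sphere_card_zero hp3
  · have hA0 : (A : ZMod p) ≠ 0 := fun h0 => hd ((ZMod.intCast_zmod_eq_zero_iff_dvd A p).1 h0)
    rw [if_neg hd]
    exact sphere_card_unit hp3 hA0


lemma lin_one {p : ℕ} [Fact p.Prime] {a : ℤ} (ha : ¬ (p : ℤ) ∣ a) (d : ℤ) :
    ((Finset.range p).filter (fun s : ℕ => (p : ℤ) ∣ d + a * s)).card = 1 := by
  have hα : (a : ZMod p) ≠ 0 := fun h => ha ((ZMod.intCast_zmod_eq_zero_iff_dvd a p).1 h)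
  set s₀ : ZMod p := (-d) * (a : ZMod p)⁻¹ with hs₀
  have key : ∀ z : ZMod p, ((d : ZMod p) + (a : ZMod p) * z = 0) ↔ z = s₀ := by
    intro z
    rw [hs₀]
    constructor
    · intro h
      field_simp
      linear_combination h
    · intro h
      subst h
      field_simp
      try ring
  rw [Finset.card_eq_one]
  refine ⟨s₀.val, ?_⟩
  ext s
  simp only [Finset.mem_filter, Finset.mem_range, Finset.mem_singleton]
  constructor
  · rintro ⟨hlt, hdvd⟩
    have h0 : ((d + a * s : ℤ) : ZMod p) = 0 := (ZMod.intCast_zmod_eq_zero_iff_dvd _ p).2 hdvd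
    push_cast at h0
    have := (key (s : ZMod p)).1 h0
    rw [← this, ZMod.val_cast_of_lt hlt]
  · rintro rfl
    refine ⟨ZMod.val_lt _, ?_⟩
    rw [← ZMod.intCast_zmod_eq_zero_iff_dvd]
    push_cast
    rw [ZMod.natCast_val, ZMod.cast_id]
    exact (key s₀).2 rfl

lemma lin_two {p : ℕ} [Fact p.Prime] {a b : ℤ} (hab : ¬ (p : ℤ) ∣ a ∨ ¬ (p : ℤ) ∣ b) (c : ℤ) :
    (((Finset.range p) ×ˢ (Finset.range p)).filter
      (fun st : ℕ × ℕ => (p : ℤ) ∣ c + a * st.1 + b * st.2)).card = p := by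
  rcases hab with ha | hb
  · rw [Finset.card_filter, Finset.sum_product_right]
    have : ∀ t ∈ Finset.range p,
        (∑ s ∈ Finset.range p, if (p : ℤ) ∣ c + a * s + b * t then 1 else 0) = 1 := by
      intro t _
      rw [← Finset.card_filter]
      have := lin_one ha (c + b * t)
      rw [← this]
      congr 1
      apply Finset.filter_congr
      intro s _
      have : c + a * (s:ℤ) + b * t = c + b * t + a * s := by ring
      rw [this]
    rw [Finset.sum_congr rfl this]
    simp
  · rw [Finset.card_filter, Finset.sum_product]
    have : ∀ s ∈ Finset.range p,
        (∑ t ∈ Finset.range p, if (p : ℤ) ∣ c + a * s + b * t then 1 else 0) = 1 := by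
      intro s _
      rw [← Finset.card_filter]
      exact lin_one hb (c + a * s)
    rw [Finset.sum_congr rfl this]
    simp

lemma scount_step {p : ℕ} (hp : p.Prime) (hodd : p % 2 = 1) {A : ℤ} (hA : ¬ (p : ℤ) ∣ A)
    {n : ℕ} (hn : 1 ≤ n) : scount p (n + 1) A = p * scount p n A := by
  haveI : Fact p.Prime := ⟨hp⟩
  have hq : 0 < p ^ n := pow_pos hp.pos n
  have hqp : p ^ (n + 1) = p ^ n * p := pow_succ p n
  -- Step 1: reindex
  have hre : scount p (n + 1) A =
      ((((Finset.range (p ^ n)) ×ˢ (Finset.range (p ^ n))) ×ˢ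
        ((Finset.range p) ×ˢ (Finset.range p))).filter
        (fun w => (p : ℤ) ^ (n + 1) ∣
          ((w.1.1 + p ^ n * w.2.1 : ℕ) : ℤ) ^ 2 + ((w.1.2 + p ^ n * w.2.2 : ℕ) : ℤ) ^ 2 - A)).card := by
    rw [scount]
    apply Finset.card_bij' (fun z _ => ((z.1 % p ^ n, z.2 % p ^ n), (z.1 / p ^ n, z.2 / p ^ n)))
      (fun w _ => (w.1.1 + p ^ n * w.2.1, w.1.2 + p ^ n * w.2.2))
    · intro z hz
      simp only [Finset.mem_filter, Finset.mem_product, Finset.mem_range] at hz ⊢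
      obtain ⟨⟨h1, h2⟩, h3⟩ := hz
      rw [hqp] at h1 h2
      refine ⟨⟨⟨Nat.mod_lt _ hq, Nat.mod_lt _ hq⟩,
        ⟨Nat.div_lt_of_lt_mul h1, Nat.div_lt_of_lt_mul h2⟩⟩, ?_⟩
      rw [Nat.mod_add_div, Nat.mod_add_div]
      exact h3
    · intro w hw
      simp only [Finset.mem_filter, Finset.mem_product, Finset.mem_range] at hw ⊢
      obtain ⟨⟨⟨h1, h2⟩, ⟨h3, h4⟩⟩, h5⟩ := hw
      have key : ∀ a b : ℕ, a < p ^ n → b < p → a + p ^ n * b < p ^ (n + 1) := by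
        intro a b ha hb
        calc a + p ^ n * b < p ^ n + p ^ n * b := by omega
        _ = p ^ n * (b + 1) := by ring
        _ ≤ p ^ n * p := Nat.mul_le_mul_left _ hb
        _ = p ^ (n + 1) := hqp.symm
      exact ⟨⟨key _ _ h1 h3, key _ _ h2 h4⟩, h5⟩
    · intro z hz
      simp only [Nat.mod_add_div]
    · intro w hw
      simp only [Finset.mem_filter, Finset.mem_product, Finset.mem_range] at hw
      obtain ⟨⟨⟨h1, h2⟩, ⟨h3, h4⟩⟩, h5⟩ := hw
      have e1 : ∀ a b : ℕ, a < p ^ n → (a + p ^ n * b) % p ^ n = a := by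
        intro a b ha
        rw [Nat.add_mul_mod_self_left, Nat.mod_eq_of_lt ha]
      have e2 : ∀ a b : ℕ, a < p ^ n → (a + p ^ n * b) / p ^ n = b := by
        intro a b ha
        rw [Nat.add_mul_div_left _ _ hq, Nat.div_eq_of_lt ha, Nat.zero_add]
      simp only [e1 _ _ h1, e1 _ _ h2, e2 _ _ h1, e2 _ _ h2]
  -- Step 2: evaluate fibers
  rw [hre, Finset.card_filter, Finset.sum_product]
  dsimp only
  have inner : ∀ v : ℕ × ℕ, v ∈ (Finset.range (p ^ n)) ×ˢ (Finset.range (p ^ n)) →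
      (∑ st ∈ (Finset.range p) ×ˢ (Finset.range p),
        if (p : ℤ) ^ (n + 1) ∣
          ((v.1 + p ^ n * st.1 : ℕ) : ℤ) ^ 2 + ((v.2 + p ^ n * st.2 : ℕ) : ℤ) ^ 2 - A
        then 1 else 0)
      = if (p : ℤ) ^ n ∣ (v.1 : ℤ) ^ 2 + (v.2 : ℤ) ^ 2 - A then p else 0 := by
    rintro ⟨x, y⟩ hv
    dsimp only
    rw [← Finset.card_filter]
    by_cases hd : (p : ℤ) ^ n ∣ (x : ℤ) ^ 2 + (y : ℤ) ^ 2 - A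
    · rw [if_pos hd]
      obtain ⟨k, hk⟩ := hd
      -- the condition is linear in (s,t) mod p
      have hcond : ∀ s t : ℕ,
          ((p : ℤ) ^ (n + 1) ∣
            ((x + p ^ n * s : ℕ) : ℤ) ^ 2 + ((y + p ^ n * t : ℕ) : ℤ) ^ 2 - A)
          ↔ (p : ℤ) ∣ k + (2 * x) * s + (2 * y) * t := by
        intro s t
        have expand : ((x + p ^ n * s : ℕ) : ℤ) ^ 2 + ((y + p ^ n * t : ℕ) : ℤ) ^ 2 - A
            = (p : ℤ) ^ n * (k + (2 * x) * s + (2 * y) * t + (p : ℤ) ^ n * (s ^ 2 + t ^ 2)) := by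
          push_cast
          linear_combination hk
        rw [expand, pow_succ]
        rw [mul_dvd_mul_iff_left (a := (p : ℤ) ^ n) (pow_ne_zero _ (by exact_mod_cast hp.ne_zero))]
        have hppn : (p : ℤ) ∣ (p : ℤ) ^ n * ((s : ℤ) ^ 2 + (t : ℤ) ^ 2) :=
          Dvd.dvd.mul_right (dvd_pow_self _ (by omega)) _
        constructor
        · intro h
          have := dvd_sub h hppn
          simpa using this
        · intro h
          exact dvd_add h hppn
      have hfil : (((Finset.range p) ×ˢ (Finset.range p)).filter
          (fun st : ℕ × ℕ => (p : ℤ) ^ (n + 1) ∣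
            ((x + p ^ n * st.1 : ℕ) : ℤ) ^ 2 + ((y + p ^ n * st.2 : ℕ) : ℤ) ^ 2 - A))
          = (((Finset.range p) ×ˢ (Finset.range p)).filter
          (fun st : ℕ × ℕ => (p : ℤ) ∣ k + (2 * x) * st.1 + (2 * y) * st.2)) := by
        apply Finset.filter_congr
        intro st _
        rw [hcond st.1 st.2]
      rw [hfil]
      apply lin_two
      -- not both coefficients divisible by p
      by_contra hcon
      push_neg at hcon
      obtain ⟨h2x, h2y⟩ := hcon
      have hp2 : ¬ (p : ℤ) ∣ 2 := by
        intro h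
        have h2 : p ∣ 2 := by exact_mod_cast h
        have := Nat.le_of_dvd (by norm_num) h2
        have := hp.two_le
        omega
      have hx : (p : ℤ) ∣ (x : ℤ) := ((Int.Prime.dvd_mul' (by exact_mod_cast hp) h2x).resolve_left hp2)
      have hy : (p : ℤ) ∣ (y : ℤ) := ((Int.Prime.dvd_mul' (by exact_mod_cast hp) h2y).resolve_left hp2)
      apply hA
      have hxy : (p : ℤ) ∣ (x : ℤ) ^ 2 + (y : ℤ) ^ 2 :=
        dvd_add (dvd_pow hx two_ne_zero) (dvd_pow hy two_ne_zero)
      have hpk : (p : ℤ) ∣ (p : ℤ) ^ n * k :=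
        Dvd.dvd.mul_right (dvd_pow_self _ (by omega)) _
      have hAeq : A = ((x : ℤ) ^ 2 + (y : ℤ) ^ 2) - (p : ℤ) ^ n * k := by linarith [hk]
      rw [hAeq]
      exact dvd_sub hxy hpk
    · rw [if_neg hd]
      rw [Finset.card_eq_zero, Finset.filter_eq_empty_iff]
      rintro ⟨s, t⟩ _
      intro hcond
      apply hd
      have h1 : (p : ℤ) ^ n ∣
          ((x + p ^ n * s : ℕ) : ℤ) ^ 2 + ((y + p ^ n * t : ℕ) : ℤ) ^ 2 - A :=
        dvd_trans (pow_dvd_pow _ (Nat.le_succ n)) hcond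
      have h2 : ((x + p ^ n * s : ℕ) : ℤ) ^ 2 + ((y + p ^ n * t : ℕ) : ℤ) ^ 2 - A
          - ((x : ℤ) ^ 2 + (y : ℤ) ^ 2 - A)
          = (p : ℤ) ^ n * (2 * x * s + 2 * y * t + (p : ℤ) ^ n * (s ^ 2 + t ^ 2)) := by
        push_cast
        ring
      have := dvd_sub h1 (Dvd.intro _ h2.symm)
      simpa using this
  rw [Finset.sum_congr rfl inner]
  rw [Finset.sum_ite, Finset.sum_const, Finset.sum_const, smul_eq_mul, smul_eq_mul,
    mul_zero, add_zero, scount, mul_comm]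


lemma scount_p_exact {p : ℕ} (hp : p.Prime) (hp3 : p % 4 = 3) {A : ℤ}
    (h1 : (p : ℤ) ∣ A) (h2 : ¬ (p : ℤ) ^ 2 ∣ A) {n : ℕ} (hn : 2 ≤ n) : scount p n A = 0 := by
  rw [scount, Finset.card_eq_zero, Finset.filter_eq_empty_iff]
  rintro ⟨x, y⟩ _
  intro hcond
  have hpn : (p : ℤ) ∣ (x : ℤ) ^ 2 + (y : ℤ) ^ 2 := by
    have hp1 : (p : ℤ) ∣ (x : ℤ) ^ 2 + (y : ℤ) ^ 2 - A :=
      dvd_trans (dvd_pow_self _ (by omega)) hcond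
    have := dvd_add hp1 h1
    simpa using this
  obtain ⟨hx, hy⟩ := int_dvd_of_dvd_sq_add_sq hp hp3 hpn
  apply h2
  have hsq : (p : ℤ) ^ 2 ∣ (x : ℤ) ^ 2 + (y : ℤ) ^ 2 := by
    obtain ⟨a, ha⟩ := hx
    obtain ⟨b, hb⟩ := hy
    exact ⟨a ^ 2 + b ^ 2, by rw [ha, hb]; ring⟩
  have hp2n : (p : ℤ) ^ 2 ∣ (x : ℤ) ^ 2 + (y : ℤ) ^ 2 - A :=
    dvd_trans (pow_dvd_pow _ hn) hcond
  have := dvd_sub hsq hp2n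
  simpa using this

lemma scount_scale {p : ℕ} (hp : p.Prime) (hp3 : p % 4 = 3) (B : ℤ) (n : ℕ) :
    scount p (n + 2) ((p : ℤ) ^ 2 * B) = p ^ 2 * scount p n B := by
  have hppos : 0 < p := hp.pos
  have hq : 0 < p ^ n := pow_pos hp.pos n
  have hq1 : 0 < p ^ (n + 1) := pow_pos hp.pos (n + 1)
  have hre : scount p (n + 2) ((p : ℤ) ^ 2 * B) =
      ((((Finset.range (p ^ n)) ×ˢ (Finset.range (p ^ n))) ×ˢ
        ((Finset.range p) ×ˢ (Finset.range p))).filter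
        (fun w => (p : ℤ) ^ (n + 2) ∣
          ((p * (w.1.1 + p ^ n * w.2.1) : ℕ) : ℤ) ^ 2
            + ((p * (w.1.2 + p ^ n * w.2.2) : ℕ) : ℤ) ^ 2 - (p : ℤ) ^ 2 * B)).card := by
    rw [scount]
    -- every solution has both coordinates divisible by p
    have hdvd : ∀ z : ℕ × ℕ, ((p : ℤ) ^ (n + 2) ∣
        (z.1 : ℤ) ^ 2 + (z.2 : ℤ) ^ 2 - (p : ℤ) ^ 2 * B) → p ∣ z.1 ∧ p ∣ z.2 := by
      rintro ⟨x, y⟩ hcond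
      have hpn : (p : ℤ) ∣ (x : ℤ) ^ 2 + (y : ℤ) ^ 2 := by
        have hp1 : (p : ℤ) ∣ (x : ℤ) ^ 2 + (y : ℤ) ^ 2 - (p : ℤ) ^ 2 * B :=
          dvd_trans (dvd_pow_self _ (by omega)) hcond
        have h2 : (p : ℤ) ∣ (p : ℤ) ^ 2 * B := Dvd.dvd.mul_right (dvd_pow_self _ (by omega)) _
        have := dvd_add hp1 h2
        simpa using this
      obtain ⟨hx, hy⟩ := int_dvd_of_dvd_sq_add_sq hp hp3 hpn
      exact ⟨by exact_mod_cast hx, by exact_mod_cast hy⟩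
    apply Finset.card_bij'
      (fun z _ => ((z.1 / p % p ^ n, z.2 / p % p ^ n), (z.1 / p / p ^ n, z.2 / p / p ^ n)))
      (fun w _ => (p * (w.1.1 + p ^ n * w.2.1), p * (w.1.2 + p ^ n * w.2.2)))
    · intro z hz
      simp only [Finset.mem_filter, Finset.mem_product, Finset.mem_range] at hz ⊢
      obtain ⟨⟨h1, h2⟩, h3⟩ := hz
      obtain ⟨hdx, hdy⟩ := hdvd z h3
      have e1 : p * (z.1 / p % p ^ n + p ^ n * (z.1 / p / p ^ n)) = z.1 := by
        rw [Nat.mod_add_div, Nat.mul_div_cancel' hdx]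
      have e2 : p * (z.2 / p % p ^ n + p ^ n * (z.2 / p / p ^ n)) = z.2 := by
        rw [Nat.mod_add_div, Nat.mul_div_cancel' hdy]
      have hlt1 : z.1 / p < p ^ (n + 1) := by
        apply Nat.div_lt_of_lt_mul
        calc z.1 < p ^ (n + 2) := h1
        _ = p ^ (n + 1) * p := (pow_succ p (n + 1))
        _ = p * p ^ (n + 1) := mul_comm _ _
      have hlt2 : z.2 / p < p ^ (n + 1) := by
        apply Nat.div_lt_of_lt_mul
        calc z.2 < p ^ (n + 2) := h2
        _ = p ^ (n + 1) * p := (pow_succ p (n + 1))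
        _ = p * p ^ (n + 1) := mul_comm _ _
      refine ⟨⟨⟨Nat.mod_lt _ hq, Nat.mod_lt _ hq⟩,
        ⟨Nat.div_lt_of_lt_mul (by rw [← pow_succ]; exact hlt1),
         Nat.div_lt_of_lt_mul (by rw [← pow_succ]; exact hlt2)⟩⟩, ?_⟩
      rw [e1, e2]
      exact h3
    · intro w hw
      simp only [Finset.mem_filter, Finset.mem_product, Finset.mem_range] at hw ⊢
      obtain ⟨⟨⟨h1, h2⟩, ⟨h3, h4⟩⟩, h5⟩ := hw
      have key : ∀ a b : ℕ, a < p ^ n → b < p → p * (a + p ^ n * b) < p ^ (n + 2) := by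
        intro a b ha hb
        have h6 : a + p ^ n * b < p ^ (n + 1) := by
          calc a + p ^ n * b < p ^ n + p ^ n * b := by omega
          _ = p ^ n * (b + 1) := by ring
          _ ≤ p ^ n * p := Nat.mul_le_mul_left _ hb
          _ = p ^ (n + 1) := (pow_succ p n).symm
        calc p * (a + p ^ n * b) < p * p ^ (n + 1) :=
              (Nat.mul_lt_mul_left hppos).2 h6
        _ = p ^ (n + 2) := by rw [← pow_succ']
      exact ⟨⟨key _ _ h1 h3, key _ _ h2 h4⟩, h5⟩
    · intro z hz
      simp only [Finset.mem_filter, Finset.mem_product, Finset.mem_range] at hz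
      obtain ⟨⟨h1, h2⟩, h3⟩ := hz
      obtain ⟨hdx, hdy⟩ := hdvd z h3
      have e1 : p * (z.1 / p % p ^ n + p ^ n * (z.1 / p / p ^ n)) = z.1 := by
        rw [Nat.mod_add_div, Nat.mul_div_cancel' hdx]
      have e2 : p * (z.2 / p % p ^ n + p ^ n * (z.2 / p / p ^ n)) = z.2 := by
        rw [Nat.mod_add_div, Nat.mul_div_cancel' hdy]
      exact Prod.ext e1 e2
    · intro w hw
      have e0 : ∀ a : ℕ, p * a / p = a := fun a => Nat.mul_div_cancel_left a hppos
      have e1 : ∀ a b : ℕ, a < p ^ n → (a + p ^ n * b) % p ^ n = a := by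
        intro a b ha
        rw [Nat.add_mul_mod_self_left, Nat.mod_eq_of_lt ha]
      have e2 : ∀ a b : ℕ, a < p ^ n → (a + p ^ n * b) / p ^ n = b := by
        intro a b ha
        rw [Nat.add_mul_div_left _ _ hq, Nat.div_eq_of_lt ha, Nat.zero_add]
      simp only [Finset.mem_filter, Finset.mem_product, Finset.mem_range] at hw
      obtain ⟨⟨⟨h1, h2⟩, ⟨h3, h4⟩⟩, h5⟩ := hw
      simp only [e0, e1 _ _ h1, e1 _ _ h2, e2 _ _ h1, e2 _ _ h2]
  rw [hre, Finset.card_filter, Finset.sum_product]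
  dsimp only
  have inner : ∀ v : ℕ × ℕ, v ∈ (Finset.range (p ^ n)) ×ˢ (Finset.range (p ^ n)) →
      (∑ st ∈ (Finset.range p) ×ˢ (Finset.range p),
        if (p : ℤ) ^ (n + 2) ∣
          ((p * (v.1 + p ^ n * st.1) : ℕ) : ℤ) ^ 2
            + ((p * (v.2 + p ^ n * st.2) : ℕ) : ℤ) ^ 2 - (p : ℤ) ^ 2 * B
        then 1 else 0)
      = if (p : ℤ) ^ n ∣ (v.1 : ℤ) ^ 2 + (v.2 : ℤ) ^ 2 - B then (p ^ 2 : ℕ) else 0 := by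
    rintro ⟨x, y⟩ hv
    dsimp only
    have hcond : ∀ s t : ℕ,
        ((p : ℤ) ^ (n + 2) ∣
          ((p * (x + p ^ n * s) : ℕ) : ℤ) ^ 2 + ((p * (y + p ^ n * t) : ℕ) : ℤ) ^ 2
            - (p : ℤ) ^ 2 * B)
        ↔ (p : ℤ) ^ n ∣ (x : ℤ) ^ 2 + (y : ℤ) ^ 2 - B := by
      intro s t
      have expand : ((p * (x + p ^ n * s) : ℕ) : ℤ) ^ 2 + ((p * (y + p ^ n * t) : ℕ) : ℤ) ^ 2
          - (p : ℤ) ^ 2 * B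
          = (p : ℤ) ^ 2 * (((x : ℤ) + (p : ℤ) ^ n * s) ^ 2 + ((y : ℤ) + (p : ℤ) ^ n * t) ^ 2 - B) := by
        push_cast
        ring
      have hsplit : (p : ℤ) ^ (n + 2) = (p : ℤ) ^ 2 * (p : ℤ) ^ n := by ring
      rw [expand, hsplit,
        mul_dvd_mul_iff_left (a := (p : ℤ) ^ 2) (pow_ne_zero _ (by exact_mod_cast hp.ne_zero))]
      have hdiff : ((x : ℤ) + (p : ℤ) ^ n * s) ^ 2 + ((y : ℤ) + (p : ℤ) ^ n * t) ^ 2 - B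
          - ((x : ℤ) ^ 2 + (y : ℤ) ^ 2 - B)
          = (p : ℤ) ^ n * (2 * x * s + 2 * y * t + (p : ℤ) ^ n * (s ^ 2 + t ^ 2)) := by ring
      constructor
      · intro h
        have := dvd_sub h (Dvd.intro _ hdiff.symm)
        simpa using this
      · intro h
        have := dvd_add h (Dvd.intro _ hdiff.symm)
        simpa using this
    by_cases hd : (p : ℤ) ^ n ∣ (x : ℤ) ^ 2 + (y : ℤ) ^ 2 - B
    · rw [if_pos hd]
      have : ∀ st : ℕ × ℕ, st ∈ (Finset.range p) ×ˢ (Finset.range p) →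
          (if (p : ℤ) ^ (n + 2) ∣
            ((p * (x + p ^ n * st.1) : ℕ) : ℤ) ^ 2 + ((p * (y + p ^ n * st.2) : ℕ) : ℤ) ^ 2
              - (p : ℤ) ^ 2 * B then (1 : ℕ) else 0) = 1 := by
        intro st _
        rw [if_pos ((hcond st.1 st.2).2 hd)]
      rw [Finset.sum_congr rfl this, Finset.sum_const, smul_eq_mul, mul_one,
        Finset.card_product, Finset.card_range, sq]
    · rw [if_neg hd]
      have : ∀ st : ℕ × ℕ, st ∈ (Finset.range p) ×ˢ (Finset.range p) →
          (if (p : ℤ) ^ (n + 2) ∣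
            ((p * (x + p ^ n * st.1) : ℕ) : ℤ) ^ 2 + ((p * (y + p ^ n * st.2) : ℕ) : ℤ) ^ 2
              - (p : ℤ) ^ 2 * B then (1 : ℕ) else 0) = 0 := by
        intro st _
        rw [if_neg (fun h => hd ((hcond st.1 st.2).1 h))]
      rw [Finset.sum_congr rfl this, Finset.sum_const, smul_eq_mul, mul_zero]
  rw [Finset.sum_congr rfl inner]
  rw [Finset.sum_ite, Finset.sum_const, Finset.sum_const, smul_eq_mul, smul_eq_mul,
    mul_zero, add_zero, scount, mul_comm]


lemma scount_unit {p : ℕ} (hp : p.Prime) (hp3 : p % 4 = 3) {A : ℤ} (hA : ¬ (p : ℤ) ∣ A) :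
    ∀ k : ℕ, scount p (k + 1) A = p ^ k * (p + 1) := by
  have hodd : p % 2 = 1 := by omega
  intro k
  induction k with
  | zero => rw [scount_one hp hp3, if_neg hA]; ring
  | succ m ih =>
      rw [scount_step hp hodd hA (Nat.le_add_left 1 m), ih]
      ring

lemma pv_nondvd_eq_zero {p : ℕ} (hp : p.Prime) {A : ℤ} (hA : ¬ (p : ℤ) ∣ A) :
    padicValInt p A = 0 := by
  haveI : Fact p.Prime := ⟨hp⟩
  by_contra h
  apply hA
  have := (padicValInt_dvd_iff 1 A).2 (Or.inr (Nat.one_le_iff_ne_zero.2 h))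
  simpa using this

lemma pv_scale {p : ℕ} (hp : p.Prime) {B : ℤ} (hB : B ≠ 0) :
    padicValInt p ((p : ℤ) ^ 2 * B) = 2 + padicValInt p B := by
  haveI : Fact p.Prime := ⟨hp⟩
  rw [padicValInt.mul (pow_ne_zero _ (by exact_mod_cast hp.ne_zero)) hB]
  congr 1
  unfold padicValInt
  rw [show ((p : ℤ) ^ 2).natAbs = p ^ 2 by rw [Int.natAbs_pow]; rfl]
  exact padicValNat.prime_pow 2

lemma scount_master {p : ℕ} (hp : p.Prime) (hp3 : p % 4 = 3) :
    ∀ n : ℕ, ∀ A : ℤ, scount p n A =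
      if (p : ℤ) ^ n ∣ A then p ^ (2 * (n / 2))
      else if Even (padicValInt p A) then p ^ n + p ^ (n - 1) else 0 := by
  haveI : Fact p.Prime := ⟨hp⟩
  have hpne : (p : ℤ) ≠ 0 := by exact_mod_cast hp.ne_zero
  intro n
  induction n using Nat.strong_induction_on with
  | _ n IH =>
    intro A
    match n with
    | 0 =>
        rw [if_pos (by simpa using (one_dvd A))]
        have : (0 : ℕ) < 1 := one_pos
        rw [scount]
        norm_num
    | 1 =>
        by_cases hd : (p : ℤ) ∣ A
        · rw [scount_one hp hp3, if_pos hd, if_pos (by simpa using hd)]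
          norm_num
        · rw [scount_one hp hp3, if_neg hd, if_neg (by simpa using hd),
            if_pos (by rw [pv_nondvd_eq_zero hp hd]; exact Even.zero)]
          simp [pow_one]
    | (m + 2) =>
        by_cases hd2 : (p : ℤ) ^ 2 ∣ A
        · obtain ⟨B, hB⟩ := hd2
          subst hB
          rw [scount_scale hp hp3 B m, IH m (by omega) B]
          have hiff : ((p : ℤ) ^ (m + 2) ∣ (p : ℤ) ^ 2 * B) ↔ ((p : ℤ) ^ m ∣ B) := by
            rw [show (p : ℤ) ^ (m + 2) = (p : ℤ) ^ 2 * (p : ℤ) ^ m by ring]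
            exact mul_dvd_mul_iff_left (pow_ne_zero _ hpne)
          by_cases hdm : (p : ℤ) ^ m ∣ B
          · rw [if_pos hdm, if_pos (hiff.2 hdm)]
            rw [show (m + 2) / 2 = m / 2 + 1 by omega]
            ring
          · rw [if_neg hdm, if_neg (fun h => hdm (hiff.1 h))]
            have hm1 : 1 ≤ m := by
              by_contra h
              exact hdm (by simp [show m = 0 by omega])
            have hB0 : B ≠ 0 := fun h => hdm (by simp [h])
            rw [pv_scale hp hB0]
            have heven : Even (2 + padicValInt p B) ↔ Even (padicValInt p B) := by
              rw [Nat.even_add]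
              simp
            by_cases hev : Even (padicValInt p B)
            · rw [if_pos hev, if_pos (heven.2 hev)]
              have e1 : p ^ 2 * (p ^ m + p ^ (m - 1)) = p ^ (m + 2) + p ^ (m + 1) := by
                rw [show m + 1 = (m - 1) + 2 by omega]
                ring
              rw [e1, show m + 2 - 1 = m + 1 by omega]
            · rw [if_neg hev, if_neg (fun h => hev (heven.1 h)), mul_zero]
        · have hdn : ¬ (p : ℤ) ^ (m + 2) ∣ A :=
            fun h => hd2 (dvd_trans (pow_dvd_pow _ (by omega)) h)
          rw [if_neg hdn]
          by_cases hd1 : (p : ℤ) ∣ A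
          · -- exact valuation 1, odd
            have hA0 : A ≠ 0 := fun h => hd2 (by simp [h])
            have hv1 : padicValInt p A = 1 := by
              have hge : 1 ≤ padicValInt p A := by
                have := (padicValInt_dvd_iff 1 A).1 (by simpa using hd1)
                tauto
              have hlt : ¬ 2 ≤ padicValInt p A := by
                intro h
                exact hd2 ((padicValInt_dvd_iff 2 A).2 (Or.inr h))
              omega
            rw [if_neg (by rw [hv1]; exact Nat.not_even_iff.2 rfl)]
            exact scount_p_exact hp hp3 hd1 hd2 (by omega)
          · rw [if_pos (by rw [pv_nondvd_eq_zero hp hd1]; exact Even.zero)]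
            rw [scount_unit hp hp3 hd1 (m + 1), show m + 2 - 1 = m + 1 by omega]
            ring


/-- The count `S₀(A; pⁿ)` of solutions of `x² + y² ≡ A (mod pⁿ)` for a prime `p ≡ 3 (mod 4)`. -/
theorem count_sum_two_squares_mod_p_three_mod_four (p n : ℕ) (hp : p.Prime)
    (hp3 : p % 4 = 3) (hn : 1 ≤ n) (A : ℤ) :
    (((p : ℤ) ^ n ∣ A →
      Nat.card {xy : ZMod (p ^ n) × ZMod (p ^ n) // xy.1 ^ 2 + xy.2 ^ 2 = (A : ZMod (p ^ n))}
        = p ^ (2 * (n / 2)))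
    ∧ (¬ (p : ℤ) ^ n ∣ A → Even (padicValInt p A) →
      Nat.card {xy : ZMod (p ^ n) × ZMod (p ^ n) // xy.1 ^ 2 + xy.2 ^ 2 = (A : ZMod (p ^ n))}
        = p ^ n + p ^ (n - 1))
    ∧ (¬ (p : ℤ) ^ n ∣ A → Odd (padicValInt p A) →
      Nat.card {xy : ZMod (p ^ n) × ZMod (p ^ n) // xy.1 ^ 2 + xy.2 ^ 2 = (A : ZMod (p ^ n))}
        = 0)) := by
  refine ⟨?_, ?_, ?_⟩
  · intro hdvd
    rw [card_eq_scount p n hp A, scount_master hp hp3 n A, if_pos hdvd]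
  · intro hnd hev
    rw [card_eq_scount p n hp A, scount_master hp hp3 n A, if_neg hnd, if_pos hev]
  · intro hnd hodd
    rw [card_eq_scount p n hp A, scount_master hp hp3 n A, if_neg hnd,
      if_neg (Nat.not_even_iff_odd.2 hodd)]
end

section
/- Let p ≡ 1 (mod 4) be prime, α ≤ ν_p(A) < n where A is an integer. Then S_α(A; pⁿ) = (1 + ν_p(A) − α)·p^{n+α}·(1 − 1/p), where S_α(A; pⁿ) = #{(x, y) ∈ (ℤ/pⁿℤ)² : p^α(x² + y²) ≡ A (mod pⁿ)}. -/
open Finset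

theorem card_dvd_val (N d : ℕ) [NeZero N] (hd : d ∣ N) (hd0 : d ≠ 0) :
    (Finset.univ.filter fun s : ZMod N => d ∣ s.val).card = N / d := by
  rw [Finset.card_bij' (fun s _ => s.val / d) (fun i _ => ((d * i : ℕ) : ZMod N))]
  · exact Finset.card_range (N / d)
  · intro s hs
    simp only [mem_filter, mem_univ, true_and] at hs
    exact mem_range.2 (Nat.div_lt_div_of_lt_of_dvd hd (ZMod.val_lt s))
  · intro i hi
    simp only [mem_range] at hi
    have hlt : d * i < N := by
      obtain ⟨m, rfl⟩ := hd
      rw [Nat.mul_div_cancel_left m (Nat.pos_of_ne_zero hd0)] at hi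
      exact Nat.mul_lt_mul_of_pos_left hi (Nat.pos_of_ne_zero hd0)
    simp only [mem_filter, mem_univ, true_and]
    rw [ZMod.val_natCast_of_lt hlt]
    exact Dvd.intro i rfl
  · intro s hs
    simp only [mem_filter, mem_univ, true_and] at hs
    rw [Nat.mul_div_cancel' hs]
    simp [ZMod.natCast_val, ZMod.cast_id]
  · intro i hi
    simp only [mem_range] at hi
    have hlt : d * i < N := by
      obtain ⟨m, rfl⟩ := hd
      rw [Nat.mul_div_cancel_left m (Nat.pos_of_ne_zero hd0)] at hi
      exact Nat.mul_lt_mul_of_pos_left hi (Nat.pos_of_ne_zero hd0)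
    rw [ZMod.val_natCast_of_lt hlt]
    exact Nat.mul_div_cancel_left i (Nat.pos_of_ne_zero hd0)

theorem zmod_cast_val (N : ℕ) [NeZero N] (u : ZMod N) : ((u.val : ℕ) : ZMod N) = u := by
  simp [ZMod.natCast_val, ZMod.cast_id]

theorem card_mul_eq_zero (N : ℕ) [NeZero N] (c : ZMod N) :
    (univ.filter fun t : ZMod N => c * t = 0).card = N.gcd c.val := by
  have hN0 : N ≠ 0 := NeZero.ne N
  set d := N.gcd c.val with hdd
  have hdN : d ∣ N := Nat.gcd_dvd_left N c.val
  have hdc : d ∣ c.val := Nat.gcd_dvd_right N c.val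
  have hd0 : d ≠ 0 := Nat.gcd_ne_zero_left hN0
  have hiff : ∀ t : ZMod N, (c * t = 0) ↔ (N / d) ∣ t.val := by
    intro t
    have h1 : c * t = (((c.val * t.val : ℕ)) : ZMod N) := by
      push_cast [zmod_cast_val]
      ring
    rw [h1, ZMod.natCast_eq_zero_iff]
    constructor
    · intro h
      have h2 : d * (N / d) ∣ d * ((c.val / d) * t.val) := by
        rw [Nat.mul_div_cancel' hdN, ← mul_assoc, Nat.mul_div_cancel' hdc]
        exact h
      have h3 : (N / d) ∣ (c.val / d) * t.val :=
        (Nat.mul_dvd_mul_iff_left (Nat.pos_of_ne_zero hd0)).1 h2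
      have hcop : Nat.Coprime (N / d) (c.val / d) :=
        Nat.coprime_div_gcd_div_gcd (Nat.pos_of_ne_zero hd0)
      exact hcop.dvd_of_dvd_mul_left h3
    · intro h
      calc N = d * (N / d) := (Nat.mul_div_cancel' hdN).symm
      _ ∣ d * t.val := mul_dvd_mul_left d h
      _ ∣ c.val * t.val := mul_dvd_mul_right hdc t.val
  rw [filter_congr (fun t _ => by rw [hiff t])]
  rw [card_dvd_val N (N / d) (Nat.div_dvd_of_dvd hdN)
    (Nat.div_ne_zero_iff.2 ⟨hd0, Nat.le_of_dvd (Nat.pos_of_ne_zero hN0) hdN⟩)]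
  exact Nat.div_div_self hdN hN0

theorem card_lin (N : ℕ) [NeZero N] (c b : ZMod N) :
    (univ.filter fun t : ZMod N => c * t = b).card
      = if N.gcd c.val ∣ b.val then N.gcd c.val else 0 := by
  have hN0 : N ≠ 0 := NeZero.ne N
  set d := N.gcd c.val with hdd
  have hdN : d ∣ N := Nat.gcd_dvd_left N c.val
  have hdc : d ∣ c.val := Nat.gcd_dvd_right N c.val
  split_ifs with hsol
  · -- solvable case: translate to kernel
    obtain ⟨e, he⟩ := hsol
    have hbez := Nat.gcd_eq_gcd_ab N c.val
    set y := Nat.gcdB N c.val with hy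
    set x := Nat.gcdA N c.val with hx
    set t₀ : ZMod N := ((y * e : ℤ) : ZMod N) with ht₀d
    have hcy : ((c.val : ℤ)) * y = d - N * x := by rw [hdd]; push_cast [hbez]; ring
    have key : ((c.val : ℤ)) * (y * e) = d * e - N * (x * e) := by
      linear_combination (e : ℤ) * hcy
    have hb : ((d * e : ℕ) : ZMod N) = b := by rw [← he]; exact zmod_cast_val N b
    have ht₀ : c * t₀ = b := by
      calc c * t₀ = (((c.val : ℤ) * (y * e) : ℤ) : ZMod N) := by
            rw [ht₀d]
            conv_lhs => rw [← zmod_cast_val N c]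
            push_cast
            ring
      _ = (((d : ℤ) * e - N * (x * e) : ℤ) : ZMod N) := by rw [key]
      _ = (((d : ℤ) * e : ℤ) : ZMod N) := by push_cast; simp [ZMod.natCast_self]
      _ = b := by rw [← hb]; push_cast; ring
    rw [hdd, ← card_mul_eq_zero N c]
    apply Finset.card_bij' (fun t _ => t - t₀) (fun t _ => t + t₀)
    · intro t ht
      simp only [mem_filter, mem_univ, true_and] at *
      rw [mul_sub, ht, ht₀, sub_self]
    · intro t ht
      simp only [mem_filter, mem_univ, true_and] at *
      rw [mul_add, ht, ht₀, zero_add]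
    · intro t _; ring
    · intro t _; ring
  · -- no solutions
    rw [Finset.card_eq_zero, Finset.filter_eq_empty_iff]
    intro t _
    intro hct
    apply hsol
    have h1 : ((c.val * t.val : ℕ) : ZMod N) = ((b.val : ℕ) : ZMod N) := by
      push_cast [zmod_cast_val]; rw [hct]
    have h2 : (N:ℤ) ∣ (b.val : ℤ) - (c.val * t.val : ℤ) := by
      have := (ZMod.natCast_eq_natCast_iff _ _ _).1 h1
      exact_mod_cast this.dvd
    have h3 : (d:ℤ) ∣ (b.val : ℤ) := by
      have hdZ : (d:ℤ) ∣ (N:ℤ) := Int.natCast_dvd_natCast.2 hdN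
      have hdc' : (d:ℤ) ∣ (c.val : ℤ) * t.val :=
        Dvd.dvd.mul_right (Int.natCast_dvd_natCast.2 hdc) _
      calc (d:ℤ) ∣ ((b.val : ℤ) - c.val * t.val) + c.val * t.val :=
        dvd_add (hdZ.trans h2) hdc'
      _ = (b.val : ℤ) := by ring
    exact_mod_cast h3

theorem zmod_cast_val' (N : ℕ) [NeZero N] (u : ZMod N) : ((u.val : ℕ) : ZMod N) = u := by
  simp [ZMod.natCast_val, ZMod.cast_id]

theorem exists_sqrt_neg_one_int (p : ℕ) (hp : p.Prime) (hp1 : p % 4 = 1) (m : ℕ) :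
    ∃ J : ℤ, (p:ℤ)^m ∣ J^2 + 1 := by
  have hFact : Fact p.Prime := ⟨hp⟩
  have h2le := hp.two_le
  have hp2 : p ≠ 2 := by intro h; rw [h] at hp1; omega
  rcases Nat.eq_zero_or_pos m with rfl | hm
  · exact ⟨0, by norm_num⟩
  induction m, hm using Nat.le_induction with
  | base =>
    obtain ⟨r, hr⟩ := (ZMod.exists_sq_eq_neg_one_iff (p := p)).2 (by omega)
    refine ⟨(r.val : ℤ), ?_⟩
    have h0 : (((r.val:ℤ)^2 + 1 : ℤ) : ZMod p) = 0 := by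
      push_cast [zmod_cast_val']
      rw [sq, ← hr]
      ring
    have := (ZMod.intCast_zmod_eq_zero_iff_dvd _ p).1 h0
    simpa using this
  | succ m hm ih =>
    obtain ⟨J, c, hc⟩ := ih
    have hpJ2 : ((2 * J : ℤ) : ZMod p) ≠ 0 := by
      rw [Ne, ZMod.intCast_zmod_eq_zero_iff_dvd]
      intro h
      have h2 : Prime (p:ℤ) := Nat.prime_iff_prime_int.1 hp
      rcases h2.dvd_mul.1 h with h' | h'
      · have hle : (p:ℤ) ≤ 2 := Int.le_of_dvd (by norm_num) h'
        omega
      · have hpm : (p:ℤ) ∣ J^2 + 1 := by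
          calc (p:ℤ) ∣ (p:ℤ)^m := dvd_pow_self _ (by omega)
          _ ∣ J^2 + 1 := ⟨c, hc⟩
        have h'' : (p:ℤ) ∣ J^2 := by rw [sq]; exact h'.mul_right J
        have h1 : (p:ℤ) ∣ 1 := (dvd_add_right h'').mp hpm
        have := Int.le_of_dvd one_pos h1
        omega
    set u : ZMod p := ((2 * J : ℤ) : ZMod p) with hu
    obtain ⟨tb, htb⟩ : ∃ tb : ZMod p, u * tb = -((c:ℤ):ZMod p) :=
      ⟨u⁻¹ * -((c:ℤ):ZMod p), by rw [← mul_assoc, mul_inv_cancel₀ hpJ2, one_mul]⟩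
    have hu2 : (2:ZMod p) * ((J:ℤ):ZMod p) = u := by rw [hu]; push_cast; ring
    have hdvd : (p:ℤ) ∣ c + 2 * J * (tb.val : ℤ) := by
      have h0 : ((c + 2 * J * (tb.val : ℤ) : ℤ) : ZMod p) = 0 := by
        push_cast [zmod_cast_val']
        linear_combination tb * hu2 + htb
      exact_mod_cast (ZMod.intCast_zmod_eq_zero_iff_dvd _ p).1 h0
    obtain ⟨w, hw⟩ := hdvd
    refine ⟨J + (tb.val : ℤ) * p^m, w + (tb.val : ℤ)^2 * p^(m-1), ?_⟩
    have hmm : (p:ℤ)^m = (p:ℤ)^(m-1) * p := by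
      rw [← pow_succ]
      congr 1
      omega
    calc (J + (tb.val : ℤ) * p^m)^2 + 1 = (J^2 + 1) + (2*J*(tb.val : ℤ)) * p^m + (tb.val : ℤ)^2 * (p:ℤ)^m * p^m := by ring
    _ = (p:ℤ)^m * c + (2*J*(tb.val : ℤ)) * p^m + (tb.val : ℤ)^2 * ((p:ℤ)^(m-1) * p) * p^m := by rw [← hc]; rw [← hmm]
    _ = (p:ℤ)^m * (c + 2*J*(tb.val : ℤ)) + (p:ℤ)^(m+1) * ((tb.val : ℤ)^2 * p^(m-1)) := by ring
    _ = (p:ℤ)^m * ((p:ℤ) * w) + (p:ℤ)^(m+1) * ((tb.val : ℤ)^2 * p^(m-1)) := by rw [hw]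
    _ = (p:ℤ)^(m+1) * (w + (tb.val : ℤ)^2 * p^(m-1)) := by ring

theorem exists_sqrt_neg_one_s6 (p : ℕ) (hp : p.Prime) (hp1 : p % 4 = 1) (m : ℕ) [NeZero (p^m)] :
    ∃ j : ZMod (p^m), j^2 = -1 := by
  obtain ⟨J, hJ⟩ := exists_sqrt_neg_one_int p hp hp1 m
  refine ⟨(J : ZMod (p^m)), ?_⟩
  have h0 : ((J^2 + 1 : ℤ) : ZMod (p^m)) = 0 := by
    rw [ZMod.intCast_zmod_eq_zero_iff_dvd]
    exact_mod_cast hJ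
  push_cast at h0
  linear_combination h0

theorem gcd_prime_pow_pow (p a b : ℕ) (hp : p.Prime) :
    Nat.gcd (p^a) (p^b) = p^(min a b) := by
  rcases le_total a b with h | h
  · rw [Nat.gcd_eq_left (pow_dvd_pow p h), min_eq_left h]
  · rw [Nat.gcd_eq_right (pow_dvd_pow p h), min_eq_right h]

/-- The value of `S_α(A; pⁿ)` for `p ≡ 1 (mod 4)` and `α ≤ ν_p(A) < n`. -/
theorem count_shifted_sum_two_squares_one_mod_four (p n α : ℕ) (hp : p.Prime)
    (hp1 : p % 4 = 1) (A : ℤ) (hA : A ≠ 0)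
    (hα : α ≤ padicValInt p A) (hν : padicValInt p A < n) :
    Nat.card {xy : ZMod (p ^ n) × ZMod (p ^ n) //
        (p : ZMod (p ^ n)) ^ α * (xy.1 ^ 2 + xy.2 ^ 2) = (A : ZMod (p ^ n))}
      = (1 + padicValInt p A - α) * (p ^ (n + α) - p ^ (n + α - 1)) := by
  have hFact : Fact p.Prime := ⟨hp⟩
  have h2le := hp.two_le
  have hp1' : 1 < p := h2le
  set ν := padicValInt p A with hνdef
  have hn1 : 1 ≤ n := by omega
  haveI hNz : NeZero (p ^ n) := ⟨pow_ne_zero n (by omega)⟩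
  set Abar : ZMod (p ^ n) := (A : ZMod (p ^ n)) with hAbar
  -- divisibility characterization of Abar.val
  have hAN : ((p ^ n : ℕ) : ℤ) ∣ A - (Abar.val : ℤ) := by
    have h0 : ((A - (Abar.val : ℤ) : ℤ) : ZMod (p ^ n)) = 0 := by
      push_cast [zmod_cast_val']
      rw [hAbar]
      ring
    exact (ZMod.intCast_zmod_eq_zero_iff_dvd _ _).1 h0
  have hdvdA : ∀ e : ℕ, e ≤ n → (p ^ e ∣ Abar.val ↔ e ≤ ν) := by
    intro e he
    have hpe : (p:ℤ) ^ e ∣ ((p ^ n : ℕ) : ℤ) := by push_cast; exact pow_dvd_pow _ he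
    have hstep : ((p:ℤ) ^ e ∣ (Abar.val : ℤ)) ↔ (p:ℤ) ^ e ∣ A := by
      constructor
      · intro h
        have h2 := dvd_add (hpe.trans hAN) h
        simpa using h2
      · intro h
        have h2 := dvd_sub h (hpe.trans hAN)
        simpa using h2
    rw [← Int.natCast_dvd_natCast]
    push_cast
    rw [hstep, padicValInt_dvd_iff]
    simp [hA, hνdef]
  -- square root of -1 and inverse of 2
  obtain ⟨j, hj⟩ := exists_sqrt_neg_one_s6 p hp hp1 n
  have hu2 : IsUnit ((2:ℕ) : ZMod (p ^ n)) := by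
    rw [ZMod.isUnit_iff_coprime]
    exact (Nat.coprime_two_left.2 (Nat.odd_iff.2 (by omega))).pow_right n
  obtain ⟨i2, hi2⟩ := hu2.exists_right_inv
  have hi2' : (2 : ZMod (p ^ n)) * i2 = 1 := by push_cast at hi2; exact hi2
  -- the substitution equivalence
  let e : (ZMod (p ^ n) × ZMod (p ^ n)) ≃ (ZMod (p ^ n) × ZMod (p ^ n)) :=
    { toFun := fun xy => (xy.1 + j * xy.2, xy.1 - j * xy.2)
      invFun := fun st => ((st.1 + st.2) * i2, (st.1 - st.2) * i2 * (-j))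
      left_inv := by
        rintro ⟨x, y⟩
        simp only [Prod.mk.injEq]
        constructor
        · linear_combination x * hi2'
        · linear_combination (-2*y*i2) * hj + y * hi2'
      right_inv := by
        rintro ⟨s, t⟩
        simp only [Prod.mk.injEq]
        constructor
        · linear_combination (-(s-t)*i2) * hj + s * hi2'
        · linear_combination ((s-t)*i2) * hj + t * hi2' }
  have step1 : Nat.card {xy : ZMod (p ^ n) × ZMod (p ^ n) //
        (p : ZMod (p ^ n)) ^ α * (xy.1 ^ 2 + xy.2 ^ 2) = Abar}
      = Nat.card {st : ZMod (p ^ n) × ZMod (p ^ n) //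
        (p : ZMod (p ^ n)) ^ α * (st.1 * st.2) = Abar} := by
    apply Nat.card_congr
    apply Equiv.subtypeEquiv e
    rintro ⟨x, y⟩
    have key : (x + j*y) * (x - j*y) = x^2 + y^2 := by linear_combination (-(y^2)) * hj
    simp only [e, Equiv.coe_fn_mk]
    rw [key]
  have step2 : Nat.card {st : ZMod (p ^ n) × ZMod (p ^ n) //
        (p : ZMod (p ^ n)) ^ α * (st.1 * st.2) = Abar}
      = ∑ s : ZMod (p ^ n),
          (univ.filter fun t : ZMod (p ^ n) => ((p : ZMod (p ^ n)) ^ α * s) * t = Abar).card := by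
    refine (Nat.card_congr (Equiv.subtypeProdEquivSigmaSubtype
      (fun a b : ZMod (p ^ n) => (p : ZMod (p ^ n)) ^ α * (a * b) = Abar))).trans ?_
    rw [Nat.card_eq_fintype_card, Fintype.card_sigma]
    apply Finset.sum_congr rfl
    intro s _
    rw [Fintype.card_subtype]
    congr 1
    apply filter_congr
    intro t _
    rw [← mul_assoc]
  -- the exact-valuation function
  set g : ZMod (p ^ n) → ℕ := fun s => ((p ^ n).gcd s.val).factorization p with hg
  have hgs : ∀ s : ZMod (p ^ n), (p ^ n).gcd s.val = p ^ g s := by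
    intro s
    obtain ⟨k, hk, hdk⟩ := (Nat.dvd_prime_pow hp).1 (Nat.gcd_dvd_left (p ^ n) s.val)
    rw [hg]
    simp only
    rw [hdk, hp.factorization_pow]
    simp
  have hgle : ∀ s : ZMod (p ^ n), g s ≤ n := by
    intro s
    have h1 : p ^ g s ∣ p ^ n := (hgs s) ▸ Nat.gcd_dvd_left (p ^ n) s.val
    exact (Nat.pow_dvd_pow_iff_le_right hp1').1 h1
  -- gcd of the coefficient
  have gcd_mod_eq : ∀ N x : ℕ, Nat.gcd N (x % N) = Nat.gcd N x := by
    intro N x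
    rw [Nat.gcd_rec N x, Nat.gcd_comm]
  have hcgcd : ∀ s : ZMod (p ^ n),
      (p ^ n).gcd (((p : ZMod (p ^ n)) ^ α * s).val) = p ^ (min n (α + g s)) := by
    intro s
    have h1 : ((p : ZMod (p ^ n)) ^ α * s) = (((p ^ α * s.val : ℕ)) : ZMod (p ^ n)) := by
      rw [Nat.cast_mul, Nat.cast_pow, zmod_cast_val']
    rw [h1, ZMod.val_natCast, gcd_mod_eq]
    rw [show (p^n).gcd (p^α * s.val) = (p^n).gcd (p^α * ((p^n).gcd s.val)) from by
      rw [← Nat.gcd_mul_left, ← Nat.gcd_assoc, Nat.gcd_eq_left (dvd_mul_left (p^n) (p^α))]]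
    rw [hgs s, ← pow_add, gcd_prime_pow_pow p n (α + g s) hp]
  -- fiber cardinalities
  have hfibercard : ∀ k, k < n →
      (univ.filter fun s : ZMod (p ^ n) => g s = k).card = p^(n-k) - p^(n-k-1) := by
    intro k hk
    have hset : (univ.filter fun s : ZMod (p ^ n) => g s = k)
        = (univ.filter fun s : ZMod (p ^ n) => p^k ∣ s.val)
          \ (univ.filter fun s : ZMod (p ^ n) => p^(k+1) ∣ s.val) := by
      ext s
      simp only [mem_sdiff, mem_filter, mem_univ, true_and]
      constructor
      · rintro rfl
        refine ⟨(hgs s) ▸ Nat.gcd_dvd_right (p ^ n) s.val, ?_⟩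
        intro hcon
        have hdN : p^(g s + 1) ∣ p ^ n := pow_dvd_pow p (by omega)
        have h3 : p^(g s + 1) ∣ (p ^ n).gcd s.val := Nat.dvd_gcd hdN hcon
        rw [hgs s] at h3
        have := (Nat.pow_dvd_pow_iff_le_right hp1').1 h3
        omega
      · rintro ⟨h1, h2⟩
        have hkN : p^k ∣ p ^ n := pow_dvd_pow p (by omega)
        have hle : k ≤ g s := by
          have h3 : p^k ∣ p^(g s) := (hgs s) ▸ Nat.dvd_gcd hkN h1
          exact (Nat.pow_dvd_pow_iff_le_right hp1').1 h3
        by_contra hne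
        apply h2
        calc p^(k+1) ∣ p^(g s) := pow_dvd_pow p (by omega)
        _ = (p ^ n).gcd s.val := (hgs s).symm
        _ ∣ s.val := Nat.gcd_dvd_right (p ^ n) s.val
    rw [hset, card_sdiff_of_subset (by
      intro s hs
      simp only [mem_filter, mem_univ, true_and] at *
      exact (pow_dvd_pow p (Nat.le_succ k)).trans hs)]
    rw [card_dvd_val (p^n) (p^k) (pow_dvd_pow p (by omega)) (pow_ne_zero _ (by omega)),
      card_dvd_val (p^n) (p^(k+1)) (pow_dvd_pow p (by omega)) (pow_ne_zero _ (by omega)),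
      Nat.pow_div (by omega) (by omega), Nat.pow_div (by omega) (by omega), Nat.sub_sub]
  -- per-s count
  have step3 : ∀ s : ZMod (p ^ n),
      (univ.filter fun t : ZMod (p ^ n) => ((p : ZMod (p ^ n)) ^ α * s) * t = Abar).card
        = if α + g s ≤ ν then p^(α + g s) else 0 := by
    intro s
    rw [card_lin, hcgcd s]
    by_cases hcase : α + g s ≤ ν
    · rw [if_pos hcase]
      have hmin : min n (α + g s) = α + g s := min_eq_right (by omega)
      rw [hmin, if_pos ((hdvdA _ (by omega)).2 hcase)]
    · rw [if_neg hcase]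
      rw [if_neg]
      intro hcon
      have h4 := (hdvdA _ (min_le_left n (α + g s))).1 hcon
      have := hgle s
      omega
  rw [step1, step2]
  calc ∑ s : ZMod (p ^ n),
        (univ.filter fun t : ZMod (p ^ n) => ((p : ZMod (p ^ n)) ^ α * s) * t = Abar).card
      = ∑ s : ZMod (p ^ n), (if α + g s ≤ ν then p^(α + g s) else 0) :=
        Finset.sum_congr rfl (fun s _ => step3 s)
    _ = ∑ k ∈ range (n+1), ∑ s ∈ univ.filter (fun s : ZMod (p ^ n) => g s = k),
          (if α + g s ≤ ν then p^(α + g s) else 0) :=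
        (Finset.sum_fiberwise_of_maps_to
          (fun s _ => mem_range.2 (by have := hgle s; omega)) _).symm
    _ = ∑ k ∈ range (n+1), (if k ≤ ν - α then p^(n+α) - p^(n+α-1) else 0) := by
        apply Finset.sum_congr rfl
        intro k hk
        rw [mem_range, Nat.lt_succ_iff] at hk
        by_cases hcase : α + k ≤ ν
        · have hkn : k < n := by omega
          have hterm : ∀ s ∈ univ.filter (fun s : ZMod (p ^ n) => g s = k),
              (if α + g s ≤ ν then p^(α + g s) else 0) = p^(α+k) := by
            intro s hs
            rw [mem_filter] at hs
            rw [hs.2, if_pos hcase]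
          rw [Finset.sum_congr rfl hterm, Finset.sum_const, smul_eq_mul,
            hfibercard k hkn, if_pos (by omega), Nat.sub_mul, ← pow_add, ← pow_add,
            show n-k+(α+k) = n+α from by omega, show n-k-1+(α+k) = n+α-1 from by omega]
        · have hterm : ∀ s ∈ univ.filter (fun s : ZMod (p ^ n) => g s = k),
              (if α + g s ≤ ν then p^(α + g s) else 0) = 0 := by
            intro s hs
            rw [mem_filter] at hs
            rw [hs.2, if_neg hcase]
          rw [Finset.sum_congr rfl hterm, Finset.sum_const, smul_eq_mul, mul_zero,
            if_neg (by omega)]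
    _ = (1 + ν - α) * (p ^ (n + α) - p ^ (n + α - 1)) := by
        rw [← Finset.sum_filter]
        have hf : (range (n+1)).filter (fun k => k ≤ ν - α) = range (ν - α + 1) := by
          ext a
          simp only [mem_filter, mem_range, Nat.lt_succ_iff]
          omega
        rw [hf, Finset.sum_const, Finset.card_range, smul_eq_mul]
        congr 1
        omega
end

section
/- Let η = 1 − (1 + log log 2)/log 2 (where log is the natural logarithm), and Q(λ) = λ log λ − λ + 1. Then Q(1/log 2) = η and 2·Q(1/(2 log 2)) = η; moreover max over λ ∈ (1, 2) of min{Q(λ), 2Q(λ/2)} equals η. -/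
open Real

private lemma hL0 : (0:ℝ) < Real.log 2 := Real.log_pos one_lt_two
private lemma hL1 : Real.log 2 < 1 := by
  have := Real.log_two_lt_d9; linarith
private lemma hLhalf : (1:ℝ)/2 < Real.log 2 := by
  have := Real.log_two_gt_d9; linarith

private lemma part1 : (1 / Real.log 2) * Real.log (1 / Real.log 2) - 1 / Real.log 2 + 1
    = 1 - (1 + Real.log (Real.log 2)) / Real.log 2 := by
  rw [one_div (Real.log 2), Real.log_inv]
  field_simp
  ring

private lemma part2 : 2 * ((1 / (2 * Real.log 2)) * Real.log (1 / (2 * Real.log 2)) - 1 / (2 * Real.log 2) + 1)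
    = 1 - (1 + Real.log (Real.log 2)) / Real.log 2 := by
  rw [one_div (2 * Real.log 2), Real.log_inv, Real.log_mul two_ne_zero hL0.ne']
  field_simp
  ring

private lemma myfderiv {x : ℝ} (hx : 0 < x) :
    HasDerivAt (fun l : ℝ => l * Real.log l - l + 1) (Real.log x) x := by
  have h := (Real.hasDerivAt_mul_log hx.ne').sub (hasDerivAt_id x)
  have h2 := h.add_const 1
  simpa using h2

private lemma gderiv {x : ℝ} (hx : 0 < x) :
    HasDerivAt (fun l : ℝ => 2 * ((l / 2) * Real.log (l / 2) - l / 2 + 1)) (Real.log (x / 2)) x := by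
  have hinner : HasDerivAt (fun l : ℝ => l / 2) (1 / 2 : ℝ) x := by
    simpa using (hasDerivAt_id x).div_const 2
  have h1 : HasDerivAt (fun l : ℝ => (l / 2) * Real.log (l / 2))
      ((Real.log (x / 2) + 1) * (1 / 2)) x := by
    have := (Real.hasDerivAt_mul_log (x := x/2) (by positivity : (x/2:ℝ) ≠ 0)).comp x hinner
    exact this
  have h2 : HasDerivAt (fun l : ℝ => 2 * ((l / 2) * Real.log (l / 2) - l / 2 + 1))
      (2 * ((Real.log (x / 2) + 1) * (1 / 2) - 1 / 2)) x :=
    (((h1.sub hinner).add_const 1).const_mul 2)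
  convert h2 using 1
  ring

private lemma fmono : MonotoneOn (fun l : ℝ => l * Real.log l - l + 1) (Set.Icc 1 2) := by
  apply monotoneOn_of_deriv_nonneg (convex_Icc 1 2)
  · exact ((Real.continuous_mul_log.sub continuous_id).add continuous_const).continuousOn
  · intro x hx
    rw [interior_Icc] at hx
    exact (myfderiv (by linarith [hx.1])).differentiableAt.differentiableWithinAt
  · intro x hx
    rw [interior_Icc] at hx
    rw [(myfderiv (by linarith [hx.1])).deriv]
    exact Real.log_nonneg (by linarith [hx.1])

private lemma ganti : AntitoneOn (fun l : ℝ => 2 * ((l / 2) * Real.log (l / 2) - l / 2 + 1)) (Set.Icc 1 2) := by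
  apply antitoneOn_of_deriv_nonpos (convex_Icc 1 2)
  · apply Continuous.continuousOn
    have : Continuous fun l : ℝ => (l/2) * Real.log (l/2) :=
      Real.continuous_mul_log.comp (continuous_id.div_const 2)
    continuity
  · intro x hx
    rw [interior_Icc] at hx
    exact (gderiv (by linarith [hx.1])).differentiableAt.differentiableWithinAt
  · intro x hx
    rw [interior_Icc] at hx
    rw [(gderiv (by linarith [hx.1])).deriv]
    exact Real.log_nonpos (by linarith [hx.1]) (by linarith [hx.2])

theorem eta_as_max_min :
    ((1 / Real.log 2) * Real.log (1 / Real.log 2) - 1 / Real.log 2 + 1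
        = 1 - (1 + Real.log (Real.log 2)) / Real.log 2)
    ∧ (2 * ((1 / (2 * Real.log 2)) * Real.log (1 / (2 * Real.log 2)) - 1 / (2 * Real.log 2) + 1)
        = 1 - (1 + Real.log (Real.log 2)) / Real.log 2)
    ∧ IsGreatest
        ((fun l : ℝ => min (l * Real.log l - l + 1) (2 * ((l / 2) * Real.log (l / 2) - l / 2 + 1))) ''
          Set.Ioo 1 2)
        (1 - (1 + Real.log (Real.log 2)) / Real.log 2) := by
  have hL := hL0
  set L := Real.log 2 with hLdef
  set l0 : ℝ := 1 / L with hl0def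
  have hl0gt : 1 < l0 := by
    rw [hl0def]
    rw [lt_div_iff₀ hL]
    linarith [hL1]
  have hl0lt : l0 < 2 := by
    rw [hl0def, div_lt_iff₀ hL]
    linarith [hLhalf]
  have hhalf : l0 / 2 = 1 / (2 * L) := by
    rw [hl0def]; ring
  have hg0 : (fun l : ℝ => 2 * ((l / 2) * Real.log (l / 2) - l / 2 + 1)) l0
      = 1 - (1 + Real.log L) / L := by
    simp only [hhalf]
    exact part2
  have hf0 : (fun l : ℝ => l * Real.log l - l + 1) l0 = 1 - (1 + Real.log L) / L := part1
  refine ⟨part1, part2, ?_, ?_⟩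
  · exact ⟨l0, ⟨hl0gt, hl0lt⟩, by simp [hf0, hg0]⟩
  · rintro y ⟨l, hl, rfl⟩
    have hlmem : l ∈ Set.Icc (1:ℝ) 2 := ⟨hl.1.le, hl.2.le⟩
    have hl0mem : l0 ∈ Set.Icc (1:ℝ) 2 := ⟨hl0gt.le, hl0lt.le⟩
    rcases le_total l l0 with h | h
    · calc min (l * Real.log l - l + 1) (2 * ((l / 2) * Real.log (l / 2) - l / 2 + 1))
          ≤ l * Real.log l - l + 1 := min_le_left _ _
        _ ≤ l0 * Real.log l0 - l0 + 1 := fmono hlmem hl0mem h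
        _ = 1 - (1 + Real.log L) / L := hf0
    · calc min (l * Real.log l - l + 1) (2 * ((l / 2) * Real.log (l / 2) - l / 2 + 1))
          ≤ 2 * ((l / 2) * Real.log (l / 2) - l / 2 + 1) := min_le_right _ _
        _ ≤ 2 * ((l0 / 2) * Real.log (l0 / 2) - l0 / 2 + 1) := ganti hl0mem hlmem h
        _ = 1 - (1 + Real.log L) / L := hg0
end
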